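/- arXiv:2112.15489 — 3 statements merged into one kernel-verified Lean document; each statement's English description precedes it below -/
import Mathlib

section
/- Assume moreover that U+G < T. Then the set of strong Pareto optimal points of the attainable set S equals {(V_mu(s), V_un(P − s)) : s ∈ [0,P]}; that is, a point of S is strongly Pareto optimal if and only if it has the form (V_mu(s), V_un(P − s)) for some split s ∈ [0,P] of the total power between multicast (s) and unicast (P − s) transmission. -/
open Finset
set_option maxHeartbeats 1000000

noncomputable section

/-- Effective estimation quality `ξ_{jk} = τ q_{jk}^{up} η_{jk}² / (1 + Σ_t τ q_{jt}^{up} η_{jt})`. -/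
def xiX {G : ℕ} {K : Fin G → ℕ} (η : ∀ j : Fin G, Fin (K j) → ℝ)
    (τ : ℕ) (qup : ∀ j : Fin G, Fin (K j) → ℝ) (j : Fin G) (k : Fin (K j)) : ℝ :=
  (τ : ℝ) * qup j k * (η j k) ^ 2 / (1 + ∑ t, (τ : ℝ) * qup j t * η j t)

/-- Effective estimation quality `θ_m = τ p_m^{up} β_m² / (1 + τ p_m^{up} β_m)`. -/
def thetaX {U : ℕ} (β : Fin U → ℝ) (τ : ℕ) (pup : Fin U → ℝ) (m : Fin U) : ℝ :=
  (τ : ℝ) * pup m * (β m) ^ 2 / (1 + (τ : ℝ) * pup m * β m)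

/-- The multicast objective
`O_mu(x) = (1-τ/T) log₂(1 + min_{j,k} N q_j^{dl} ξ_{jk} / (1 + η_{jk}(P_un+P_mu)))`. -/
def OmuX {U G : ℕ} {K : Fin G → ℕ} (N T : ℕ) (η : ∀ j : Fin G, Fin (K j) → ℝ)
    (τ : ℕ) (qup : ∀ j : Fin G, Fin (K j) → ℝ) (qdl : Fin G → ℝ) (pdl : Fin U → ℝ) : ℝ :=
  (1 - (τ : ℝ) / (T : ℝ)) * Real.logb 2 (1 + ⨅ j : Fin G, ⨅ k : Fin (K j),
    (N : ℝ) * qdl j * xiX η τ qup j k / (1 + η j k * (∑ m, pdl m + ∑ i, qdl i)))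

/-- The unicast objective
`O_un(x) = (1-τ/T) Σ_m α_m log₂(1 + N p_m^{dl} θ_m / (1 + β_m (P_un+P_mu)))`. -/
def OunX {U G : ℕ} (N T : ℕ) (β α : Fin U → ℝ)
    (τ : ℕ) (pup pdl : Fin U → ℝ) (qdl : Fin G → ℝ) : ℝ :=
  (1 - (τ : ℝ) / (T : ℝ)) * ∑ m, α m * Real.logb 2 (1 +
    (N : ℝ) * pdl m * thetaX β τ pup m / (1 + β m * (∑ u, pdl u + ∑ j, qdl j)))

/-- The feasible set (resource bundle) `X` of the multiobjective problem. -/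
def feasX {U G : ℕ} {K : Fin G → ℕ} (T : ℕ) (P : ℝ)
    (Emu : ∀ j : Fin G, Fin (K j) → ℝ) (Eun : Fin U → ℝ) (τ : ℕ)
    (qup : ∀ j : Fin G, Fin (K j) → ℝ) (qdl : Fin G → ℝ) (pup pdl : Fin U → ℝ) : Prop :=
  U + G ≤ τ ∧ τ ≤ T ∧
    (∀ j, 0 ≤ qdl j) ∧ (∀ m, 0 ≤ pdl m) ∧
    (∀ j k, 0 ≤ qup j k ∧ (τ : ℝ) * qup j k ≤ Emu j k) ∧
    (∀ m, 0 ≤ pup m ∧ (τ : ℝ) * pup m ≤ Eun m) ∧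
    ∑ m, pdl m + ∑ j, qdl j ≤ P

/-- The attainable objective set `S = {(O_mu(x), O_un(x)) : x ∈ X} ⊆ ℝ²`. -/
def attainS {U G : ℕ} {K : Fin G → ℕ} (N T : ℕ) (P : ℝ)
    (η Emu : ∀ j : Fin G, Fin (K j) → ℝ) (β Eun α : Fin U → ℝ) : Set (ℝ × ℝ) :=
  {y | ∃ (τ : ℕ) (qup : ∀ j : Fin G, Fin (K j) → ℝ) (qdl : Fin G → ℝ)
      (pup pdl : Fin U → ℝ),
    feasX T P Emu Eun τ qup qdl pup pdl ∧
    y = (OmuX N T η τ qup qdl pdl, OunX N T β α τ pup pdl qdl)}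

/-- The multicast value function `V_mu(s)`: the best multicast objective when the
multicast downlink power is at most `s` and the unicast downlink power equals `P - s`. -/
def VmuX {U G : ℕ} {K : Fin G → ℕ} (N T : ℕ) (P : ℝ)
    (η Emu : ∀ j : Fin G, Fin (K j) → ℝ) (β Eun α : Fin U → ℝ) (s : ℝ) : ℝ :=
  sSup {v : ℝ | ∃ (τ : ℕ) (qup : ∀ j : Fin G, Fin (K j) → ℝ) (qdl : Fin G → ℝ)
      (pup pdl : Fin U → ℝ),
    feasX T P Emu Eun τ qup qdl pup pdl ∧
    (∑ j, qdl j ≤ s) ∧ (∑ m, pdl m = P - s) ∧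
    v = OmuX N T η τ qup qdl pdl}

/-- The unicast value function `V_un(s)`: the best unicast objective when the unicast
downlink power is at most `s` and the multicast downlink power equals `P - s`. -/
def VunX {U G : ℕ} {K : Fin G → ℕ} (N T : ℕ) (P : ℝ)
    (η Emu : ∀ j : Fin G, Fin (K j) → ℝ) (β Eun α : Fin U → ℝ) (s : ℝ) : ℝ :=
  sSup {v : ℝ | ∃ (τ : ℕ) (qup : ∀ j : Fin G, Fin (K j) → ℝ) (qdl : Fin G → ℝ)
      (pup pdl : Fin U → ℝ),
    feasX T P Emu Eun τ qup qdl pup pdl ∧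
    (∑ m, pdl m ≤ s) ∧ (∑ j, qdl j = P - s) ∧
    v = OunX N T β α τ pup pdl qdl}

/- ========= generic helpers ========= -/

lemma fin_ciInf_le {n : ℕ} (f : Fin n → ℝ) (i : Fin n) : ⨅ j, f j ≤ f i :=
  ciInf_le (Set.finite_range f).bddBelow i

lemma continuousOn_finset_inf' {X : Type*} [TopologicalSpace X] {s : Set X} {ι : Type*}
    (t : Finset ι) (ht : t.Nonempty) (f : ι → X → ℝ)
    (hf : ∀ i ∈ t, ContinuousOn (f i) s) :
    ContinuousOn (fun x => t.inf' ht fun i => f i x) s := by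
  intro x hx
  exact Filter.Tendsto.finset_inf'_nhds_apply ht fun i hi => hf i hi x hx

lemma ciInf_fin_eq_inf' {n : ℕ} (hn : 0 < n) (f : Fin n → ℝ) :
    ⨅ i, f i = Finset.univ.inf' ⟨⟨0, hn⟩, Finset.mem_univ _⟩ f := by
  haveI : Nonempty (Fin n) := ⟨⟨0, hn⟩⟩
  apply le_antisymm
  · obtain ⟨i, -, hi⟩ := Finset.exists_mem_eq_inf' ⟨⟨0, hn⟩, Finset.mem_univ _⟩ f
    rw [hi]; exact fin_ciInf_le f i
  · exact le_ciInf fun i => Finset.inf'_le _ (Finset.mem_univ i)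

lemma continuousOn_fin_ciInf {X : Type*} [TopologicalSpace X] {s : Set X} {n : ℕ}
    (hn : 0 < n) (f : Fin n → X → ℝ) (hf : ∀ i, ContinuousOn (f i) s) :
    ContinuousOn (fun x => ⨅ i, f i x) s := by
  simp only [ciInf_fin_eq_inf' hn]
  exact continuousOn_finset_inf' _ _ _ fun i _ => hf i

lemma fin_ciInf_pos {n : ℕ} (hn : 0 < n) {f : Fin n → ℝ} (h : ∀ i, 0 < f i) :
    0 < ⨅ i, f i := by
  rw [ciInf_fin_eq_inf' hn]
  exact (Finset.lt_inf'_iff _).2 fun i _ => h i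

section inf2
variable {G : ℕ} {K : Fin G → ℕ}

lemma le_inf2 (hG : 0 < G) (hK : ∀ j, 0 < K j) {c : ℝ} {f : ∀ j : Fin G, Fin (K j) → ℝ}
    (h : ∀ j k, c ≤ f j k) : c ≤ ⨅ j, ⨅ k, f j k := by
  haveI : Nonempty (Fin G) := Fin.pos_iff_nonempty.1 hG
  refine le_ciInf fun j => ?_
  haveI : Nonempty (Fin (K j)) := Fin.pos_iff_nonempty.1 (hK j)
  exact le_ciInf (h j)

lemma inf2_le {f : ∀ j : Fin G, Fin (K j) → ℝ} (j : Fin G) (k : Fin (K j)) :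
    ⨅ j, ⨅ k, f j k ≤ f j k :=
  (fin_ciInf_le (fun j => ⨅ k, f j k) j).trans (fin_ciInf_le (f j) k)

lemma inf2_nonneg (hG : 0 < G) (hK : ∀ j, 0 < K j) {f : ∀ j : Fin G, Fin (K j) → ℝ}
    (h : ∀ j k, 0 ≤ f j k) : 0 ≤ ⨅ j, ⨅ k, f j k := le_inf2 hG hK h

lemma inf2_mono (hG : 0 < G) (hK : ∀ j, 0 < K j) {f g : ∀ j : Fin G, Fin (K j) → ℝ}
    (h : ∀ j k, f j k ≤ g j k) : (⨅ j, ⨅ k, f j k) ≤ ⨅ j, ⨅ k, g j k :=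
  le_inf2 hG hK fun j k => (inf2_le j k).trans (h j k)

lemma inf2_pos (hG : 0 < G) (hK : ∀ j, 0 < K j) {f : ∀ j : Fin G, Fin (K j) → ℝ}
    (h : ∀ j k, 0 < f j k) : 0 < ⨅ j, ⨅ k, f j k := by
  haveI : Nonempty (Fin G) := Fin.pos_iff_nonempty.1 hG
  exact fin_ciInf_pos hG fun j => fin_ciInf_pos (hK j) (h j)

end inf2
/- ========= auxiliary objects ========= -/

variable {U G : ℕ} {K : Fin G → ℕ}

/-- pilot-energy parametrized estimation quality. -/
def xiE (η e : ∀ j : Fin G, Fin (K j) → ℝ) (j : Fin G) (k : Fin (K j)) : ℝ :=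
  e j k * (η j k) ^ 2 / (1 + ∑ t, e j t * η j t)

/-- reduced multicast objective at full power `P`. -/
def GmuF (N : ℕ) (P : ℝ) (η e : ∀ j : Fin G, Fin (K j) → ℝ) (q : Fin G → ℝ) : ℝ :=
  Real.logb 2 (1 + ⨅ j : Fin G, ⨅ k : Fin (K j),
    (N : ℝ) * q j * xiE η e j k / (1 + η j k * P))

/-- reduced unicast objective at full power `P`. -/
def GunF (N : ℕ) (P : ℝ) (β α f p : Fin U → ℝ) : ℝ :=
  ∑ m, α m * Real.logb 2 (1 +
    (N : ℝ) * p m * (f m * (β m) ^ 2 / (1 + f m * β m)) / (1 + β m * P))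

def boxE (Emu : ∀ j : Fin G, Fin (K j) → ℝ) : Set (∀ j : Fin G, Fin (K j) → ℝ) :=
  Set.univ.pi fun j => Set.univ.pi fun k => Set.Icc 0 (Emu j k)

def boxU (Eun : Fin U → ℝ) : Set (Fin U → ℝ) :=
  Set.univ.pi fun m => Set.Icc 0 (Eun m)

def sliceS (n : ℕ) (s : ℝ) : Set (Fin n → ℝ) := {q | (∀ j, 0 ≤ q j) ∧ ∑ j, q j = s}

lemma mem_boxE {Emu e : ∀ j : Fin G, Fin (K j) → ℝ} :
    e ∈ boxE Emu ↔ ∀ j k, 0 ≤ e j k ∧ e j k ≤ Emu j k := by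
  simp only [boxE, Set.mem_pi, Set.mem_univ, Set.mem_Icc, forall_true_left]

lemma mem_boxU {Eun f : Fin U → ℝ} :
    f ∈ boxU Eun ↔ ∀ m, 0 ≤ f m ∧ f m ≤ Eun m := by
  simp only [boxU, Set.mem_pi, Set.mem_univ, Set.mem_Icc, forall_true_left]

section basic
variable {η Emu : ∀ j : Fin G, Fin (K j) → ℝ} {β Eun α : Fin U → ℝ} {N : ℕ} {P : ℝ}

lemma xiE_denom_pos (hη : ∀ j k, 0 < η j k) {e : ∀ j : Fin G, Fin (K j) → ℝ}
    (he : ∀ j k, 0 ≤ e j k) (j : Fin G) :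
    0 < 1 + ∑ t, e j t * η j t :=
  add_pos_of_pos_of_nonneg one_pos
    (Finset.sum_nonneg fun t _ => mul_nonneg (he j t) (hη j t).le)

lemma xiE_nonneg (hη : ∀ j k, 0 < η j k) {e : ∀ j : Fin G, Fin (K j) → ℝ}
    (he : ∀ j k, 0 ≤ e j k) (j : Fin G) (k : Fin (K j)) : 0 ≤ xiE η e j k :=
  div_nonneg (mul_nonneg (he j k) (sq_nonneg _)) (xiE_denom_pos hη he j).le

lemma xiE_pos (hη : ∀ j k, 0 < η j k) {e : ∀ j : Fin G, Fin (K j) → ℝ}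
    (he0 : ∀ j k, 0 ≤ e j k) (j : Fin G) (k : Fin (K j)) (hek : 0 < e j k) :
    0 < xiE η e j k :=
  div_pos (mul_pos hek (pow_pos (hη j k) 2)) (xiE_denom_pos hη he0 j)

lemma sinr_mu_nonneg (hη : ∀ j k, 0 < η j k) (hP : 0 ≤ P)
    {e : ∀ j : Fin G, Fin (K j) → ℝ} (he : ∀ j k, 0 ≤ e j k) {q : Fin G → ℝ}
    (hq : ∀ j, 0 ≤ q j) (j : Fin G) (k : Fin (K j)) :
    0 ≤ (N : ℝ) * q j * xiE η e j k / (1 + η j k * P) :=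
  div_nonneg (mul_nonneg (mul_nonneg (Nat.cast_nonneg N) (hq j)) (xiE_nonneg hη he j k))
    (by nlinarith [(hη j k).le, mul_nonneg (hη j k).le hP])

lemma GmuF_nonneg (hG : 0 < G) (hK : ∀ j, 0 < K j) (hη : ∀ j k, 0 < η j k) (hP : 0 ≤ P)
    {e : ∀ j : Fin G, Fin (K j) → ℝ} (he : ∀ j k, 0 ≤ e j k) {q : Fin G → ℝ}
    (hq : ∀ j, 0 ≤ q j) : 0 ≤ GmuF N P η e q := by
  have h := inf2_nonneg hG hK (fun j k => sinr_mu_nonneg hη hP he hq j k (N := N))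
  exact Real.logb_nonneg one_lt_two (by linarith)

lemma theta_nonneg (hβ : ∀ m, 0 < β m) {f : Fin U → ℝ} (hf : ∀ m, 0 ≤ f m) (m : Fin U) :
    0 ≤ f m * (β m) ^ 2 / (1 + f m * β m) :=
  div_nonneg (mul_nonneg (hf m) (sq_nonneg _))
    (by nlinarith [mul_nonneg (hf m) (hβ m).le])

lemma sinr_un_nonneg (hβ : ∀ m, 0 < β m) (hP : 0 ≤ P) {f : Fin U → ℝ}
    (hf : ∀ m, 0 ≤ f m) {p : Fin U → ℝ} (hp : ∀ m, 0 ≤ p m) (m : Fin U) :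
    0 ≤ (N : ℝ) * p m * (f m * (β m) ^ 2 / (1 + f m * β m)) / (1 + β m * P) :=
  div_nonneg (mul_nonneg (mul_nonneg (Nat.cast_nonneg N) (hp m)) (theta_nonneg hβ hf m))
    (by nlinarith [mul_nonneg (hβ m).le hP])

lemma GunF_nonneg (hβ : ∀ m, 0 < β m) (hα : ∀ m, 0 ≤ α m) (hP : 0 ≤ P)
    {f : Fin U → ℝ} (hf : ∀ m, 0 ≤ f m) {p : Fin U → ℝ} (hp : ∀ m, 0 ≤ p m) :
    0 ≤ GunF N P β α f p :=
  Finset.sum_nonneg fun m _ => mul_nonneg (hα m)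
    (Real.logb_nonneg one_lt_two (by linarith [sinr_un_nonneg hβ hP hf hp m (N := N)]))

end basic
/- ========= compactness and existence of maximizers ========= -/

section compactness
variable {η Emu : ∀ j : Fin G, Fin (K j) → ℝ} {β Eun α : Fin U → ℝ} {N : ℕ} {P : ℝ}

lemma sliceS_compact (n : ℕ) {s : ℝ} (hs : 0 ≤ s) : IsCompact (sliceS n s) := by
  have hsub : sliceS n s ⊆ Set.univ.pi fun _ : Fin n => Set.Icc 0 s := by
    intro q hq
    rw [Set.mem_univ_pi]
    intro j
    exact ⟨hq.1 j, by
      rw [← hq.2]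
      exact Finset.single_le_sum (fun i _ => hq.1 i) (Finset.mem_univ j)⟩
  have hclosed : IsClosed (sliceS n s) := by
    have : sliceS n s =
        (⋂ j, (fun q : Fin n → ℝ => q j) ⁻¹' Set.Ici 0) ∩
          ((fun q : Fin n → ℝ => ∑ j, q j) ⁻¹' {s}) := by
      ext q
      simp [sliceS, Set.mem_iInter]
    rw [this]
    exact ((isClosed_iInter fun j => isClosed_Ici.preimage (continuous_apply j))).inter
      (isClosed_singleton.preimage (continuous_finset_sum _ fun j _ => continuous_apply j))
  exact (isCompact_univ_pi fun _ => isCompact_Icc).of_isClosed_subset hclosed hsub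

lemma sliceS_uniform_mem {n : ℕ} (hn : 0 < n) {s : ℝ} (hs : 0 ≤ s) :
    (fun _ : Fin n => s / n) ∈ sliceS n s := by
  have hn' : (n : ℝ) ≠ 0 := Nat.cast_ne_zero.2 hn.ne'
  refine ⟨fun _ => by positivity, ?_⟩
  rw [Finset.sum_const, card_univ, Fintype.card_fin, nsmul_eq_mul]
  field_simp


lemma exists_max_mu (hG : 0 < G) (hK : ∀ j, 0 < K j) (hη : ∀ j k, 0 < η j k)
    (hEmu : ∀ j k, 0 ≤ Emu j k) (hP : 0 ≤ P) {s : ℝ} (hs : 0 ≤ s) :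
    ∃ E Q, E ∈ boxE Emu ∧ Q ∈ sliceS G s ∧
      ∀ e q, e ∈ boxE Emu → q ∈ sliceS G s → GmuF N P η e q ≤ GmuF N P η E Q := by
  have hDc : IsCompact ((boxE Emu) ×ˢ (sliceS G s)) :=
    (isCompact_univ_pi fun j => isCompact_univ_pi fun k => isCompact_Icc).prod
      (sliceS_compact G hs)
  have hDne : ((boxE Emu) ×ˢ (sliceS G s)).Nonempty := by
    refine ⟨(fun _ _ => 0, fun _ => s / G), ?_, sliceS_uniform_mem hG hs⟩
    exact mem_boxE.2 fun j k => ⟨le_refl _, hEmu j k⟩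
  have hcont : ContinuousOn
      (fun x : (∀ j : Fin G, Fin (K j) → ℝ) × (Fin G → ℝ) => GmuF N P η x.1 x.2)
      ((boxE Emu) ×ˢ (sliceS G s)) := by
    have hterm : ∀ (j : Fin G) (k : Fin (K j)), ContinuousOn
        (fun x : (∀ j : Fin G, Fin (K j) → ℝ) × (Fin G → ℝ) =>
          (N : ℝ) * x.2 j * xiE η x.1 j k / (1 + η j k * P))
        ((boxE Emu) ×ˢ (sliceS G s)) := by
      intro j k
      apply ContinuousOn.div_const
      apply ContinuousOn.mul
      · exact (continuous_const.mul ((continuous_apply j).comp continuous_snd)).continuousOn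
      · simp only [xiE]
        apply ContinuousOn.div
        · exact (((continuous_apply k).comp
            ((continuous_apply j).comp continuous_fst :
              Continuous fun x : (∀ j : Fin G, Fin (K j) → ℝ) × (Fin G → ℝ) => x.1 j)).mul
              continuous_const).continuousOn
        · exact (continuous_const.add (continuous_finset_sum _ fun t _ =>
            ((continuous_apply t).comp
              ((continuous_apply j).comp continuous_fst :
                Continuous fun x : (∀ j : Fin G, Fin (K j) → ℝ) × (Fin G → ℝ) => x.1 j)).mul
                continuous_const)).continuousOn
        · intro x hx
          have he : ∀ j k, 0 ≤ x.1 j k := fun j k => (mem_boxE.1 hx.1 j k).1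
          exact (xiE_denom_pos hη he j).ne'
    have hinner : ContinuousOn
        (fun x : (∀ j : Fin G, Fin (K j) → ℝ) × (Fin G → ℝ) =>
          1 + ⨅ j : Fin G, ⨅ k : Fin (K j),
            (N : ℝ) * x.2 j * xiE η x.1 j k / (1 + η j k * P))
        ((boxE Emu) ×ˢ (sliceS G s)) :=
      continuousOn_const.add (continuousOn_fin_ciInf hG _ fun j =>
        continuousOn_fin_ciInf (hK j) _ fun k => hterm j k)
    have hne : ∀ x ∈ (boxE Emu) ×ˢ (sliceS G s),
        (1 + ⨅ j : Fin G, ⨅ k : Fin (K j),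
          (N : ℝ) * x.2 j * xiE η x.1 j k / (1 + η j k * P)) ≠ 0 := by
      intro x hx
      have h := inf2_nonneg hG hK fun j k => sinr_mu_nonneg hη hP (N := N)
        (fun j k => (mem_boxE.1 hx.1 j k).1) (fun j => hx.2.1 j) j k
      positivity
    simp only [GmuF, Real.logb]
    exact ((hinner.log hne).div_const _)
  obtain ⟨EQ, hmem, hmax⟩ := hDc.exists_isMaxOn hDne hcont
  rw [isMaxOn_iff] at hmax
  exact ⟨EQ.1, EQ.2, (Set.mem_prod.1 hmem).1, (Set.mem_prod.1 hmem).2,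
    fun e q he hq => hmax (e, q) (Set.mem_prod.2 ⟨he, hq⟩)⟩

lemma exists_max_un (hU : 0 < U) (hβ : ∀ m, 0 < β m) (hEun : ∀ m, 0 ≤ Eun m)
    (hP : 0 ≤ P) {u : ℝ} (hu : 0 ≤ u) :
    ∃ F Pd, F ∈ boxU Eun ∧ Pd ∈ sliceS U u ∧
      ∀ f p, f ∈ boxU Eun → p ∈ sliceS U u → GunF N P β α f p ≤ GunF N P β α F Pd := by
  have hDc : IsCompact ((boxU Eun) ×ˢ (sliceS U u)) :=
    (isCompact_univ_pi fun m => isCompact_Icc).prod (sliceS_compact U hu)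
  have hDne : ((boxU Eun) ×ˢ (sliceS U u)).Nonempty :=
    ⟨(fun _ => 0, fun _ => u / U), mem_boxU.2 fun m => ⟨le_refl _, hEun m⟩,
      sliceS_uniform_mem hU hu⟩
  have hcont : ContinuousOn
      (fun x : (Fin U → ℝ) × (Fin U → ℝ) => GunF N P β α x.1 x.2)
      ((boxU Eun) ×ˢ (sliceS U u)) := by
    simp only [GunF]
    apply continuousOn_finset_sum
    intro m _
    apply ContinuousOn.mul continuousOn_const
    have hinner : ContinuousOn
        (fun x : (Fin U → ℝ) × (Fin U → ℝ) =>
          1 + (N : ℝ) * x.2 m * (x.1 m * (β m) ^ 2 / (1 + x.1 m * β m)) / (1 + β m * P))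
        ((boxU Eun) ×ˢ (sliceS U u)) := by
      apply continuousOn_const.add
      apply ContinuousOn.div_const
      apply ContinuousOn.mul
      · exact (continuous_const.mul ((continuous_apply m).comp continuous_snd)).continuousOn
      · apply ContinuousOn.div
        · exact (((continuous_apply m).comp continuous_fst).mul continuous_const).continuousOn
        · exact (continuous_const.add
            (((continuous_apply m).comp continuous_fst).mul continuous_const)).continuousOn
        · intro x hx
          have h0 : 0 ≤ x.1 m := (mem_boxU.1 hx.1 m).1
          nlinarith [mul_nonneg h0 (hβ m).le]
    have hne : ∀ x ∈ (boxU Eun) ×ˢ (sliceS U u),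
        (1 + (N : ℝ) * x.2 m * (x.1 m * (β m) ^ 2 / (1 + x.1 m * β m)) / (1 + β m * P)) ≠ 0 := by
      intro x hx
      have h := sinr_un_nonneg (N := N) hβ hP (fun m => (mem_boxU.1 hx.1 m).1)
        (fun m => hx.2.1 m) m
      positivity
    simp only [Real.logb]
    exact ((hinner.log hne).div_const _)
  obtain ⟨FP, hmem, hmax⟩ := hDc.exists_isMaxOn hDne hcont
  rw [isMaxOn_iff] at hmax
  exact ⟨FP.1, FP.2, (Set.mem_prod.1 hmem).1, (Set.mem_prod.1 hmem).2,
    fun f p hf hp => hmax (f, p) (Set.mem_prod.2 ⟨hf, hp⟩)⟩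

end compactness

/- ========= reduction lemmas ========= -/

section reduction
variable {η Emu : ∀ j : Fin G, Fin (K j) → ℝ} {β Eun α : Fin U → ℝ} {N T : ℕ} {P : ℝ}

lemma OmuX_zero (hG : 0 < G) (hK : ∀ j, 0 < K j) {τ : ℕ}
    {qup : ∀ j : Fin G, Fin (K j) → ℝ} {qdl : Fin G → ℝ} {pdl : Fin U → ℝ}
    (hq0 : ∀ j, qdl j = 0) : OmuX N T η τ qup qdl pdl = 0 := by
  haveI : Nonempty (Fin G) := Fin.pos_iff_nonempty.1 hG
  haveI : ∀ j : Fin G, Nonempty (Fin (K j)) := fun j => Fin.pos_iff_nonempty.1 (hK j)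
  unfold OmuX
  simp only [hq0, mul_zero, zero_mul, zero_div, ciInf_const, add_zero, Real.logb_one]

lemma OunX_zero {τ : ℕ} {pup : Fin U → ℝ} {qdl : Fin G → ℝ} {pdl : Fin U → ℝ}
    (hp0 : ∀ m, pdl m = 0) : OunX N T β α τ pup pdl qdl = 0 := by
  unfold OunX
  simp only [hp0, mul_zero, zero_mul, zero_div, add_zero, Real.logb_one,
    Finset.sum_const_zero]

lemma red_mu (hG : 0 < G) (hK : ∀ j, 0 < K j) (hη : ∀ j k, 0 < η j k) (hP : 0 ≤ P)
    {s : ℝ} (hs0 : 0 ≤ s) (hsP : s ≤ P)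
    {E : ∀ j : Fin G, Fin (K j) → ℝ} {Q : Fin G → ℝ}
    (hE : E ∈ boxE Emu) (hQ : Q ∈ sliceS G s)
    (hmax : ∀ e q, e ∈ boxE Emu → q ∈ sliceS G s → GmuF N P η e q ≤ GmuF N P η E Q)
    {τ : ℕ} {qup : ∀ j : Fin G, Fin (K j) → ℝ} {qdl : Fin G → ℝ} {pup pdl : Fin U → ℝ}
    (hfeas : feasX T P Emu Eun τ qup qdl pup pdl)
    (hql : ∑ j, qdl j ≤ s) (hpe : ∑ m, pdl m = P - s) :
    OmuX N T η τ qup qdl pdl ≤ (1 - ((U + G : ℕ) : ℝ) / (T : ℝ)) * GmuF N P η E Q := by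
  obtain ⟨hτ1, hτ2, hqdl, hpdl, hqup, hpup, hPow⟩ := hfeas
  have hT0 : (0:ℝ) < T := by
    have : 0 < T := lt_of_lt_of_le (Nat.lt_of_lt_of_le hG (Nat.le_add_left G U)) (le_trans hτ1 hτ2)
    exact_mod_cast this
  have hτT : (τ:ℝ) ≤ T := by exact_mod_cast hτ2
  have hτUG : ((U+G:ℕ):ℝ) ≤ (τ:ℝ) := by exact_mod_cast hτ1
  have hfrac0 : 0 ≤ 1 - (τ:ℝ)/T := by
    rw [sub_nonneg]; exact div_le_one_of_le₀ hτT hT0.le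
  have hfrac : 1 - (τ:ℝ)/(T:ℝ) ≤ 1 - ((U+G:ℕ):ℝ)/(T:ℝ) := by gcongr
  have hc0 : 0 ≤ 1 - ((U+G:ℕ):ℝ)/(T:ℝ) := le_trans hfrac0 hfrac
  have hEprops := mem_boxE.1 hE
  have hGEQ : 0 ≤ GmuF N P η E Q :=
    GmuF_nonneg hG hK hη hP (fun j k => (hEprops j k).1) hQ.1
  have heprop : ∀ j k, 0 ≤ (τ:ℝ) * qup j k :=
    fun j k => mul_nonneg (Nat.cast_nonneg τ) (hqup j k).1
  have he : (fun j k => (τ:ℝ) * qup j k) ∈ boxE Emu :=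
    mem_boxE.2 fun j k => ⟨heprop j k, (hqup j k).2⟩
  have ht0 : 0 ≤ ∑ j, qdl j := Finset.sum_nonneg fun j _ => hqdl j
  rcases eq_or_lt_of_le ht0 with h0 | hpos
  · have hq0 : ∀ j, qdl j = 0 := by
      intro j
      exact (Finset.sum_eq_zero_iff_of_nonneg (fun i _ => hqdl i)).1 h0.symm j (Finset.mem_univ j)
    rw [OmuX_zero hG hK hq0]
    exact mul_nonneg hc0 hGEQ
  · have hts : (∑ j, qdl j) ≤ s := hql
    have hct : (s / (∑ j, qdl j)) * (∑ j, qdl j) = s := div_mul_cancel₀ s (ne_of_gt hpos)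
    have hc1 : 1 ≤ s / (∑ j, qdl j) := (one_le_div hpos).2 hts
    have hq' : (fun j => (s / (∑ j, qdl j)) * qdl j) ∈ sliceS G s :=
      ⟨fun j => mul_nonneg (le_trans zero_le_one hc1) (hqdl j),
        by rw [← Finset.mul_sum]; exact hct⟩
    have hstep : OmuX N T η τ qup qdl pdl ≤
        (1 - ((U+G:ℕ):ℝ)/(T:ℝ)) *
          GmuF N P η (fun j k => (τ:ℝ) * qup j k) (fun j => (s / (∑ j, qdl j)) * qdl j) := by
      unfold OmuX GmuF
      rw [hpe]
      have hxiXE : ∀ (j : Fin G) (k : Fin (K j)),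
          xiX η τ qup j k = xiE η (fun j k => (τ:ℝ) * qup j k) j k := fun j k => rfl
      have hd1 : ∀ (j : Fin G) (k : Fin (K j)),
          (0:ℝ) < 1 + η j k * (P - s + ∑ i, qdl i) := by
        intro j k
        have h1 : (0:ℝ) ≤ P - s + ∑ i, qdl i := by linarith
        nlinarith [mul_nonneg (hη j k).le h1]
      have hd2 : ∀ (j : Fin G) (k : Fin (K j)), (0:ℝ) < 1 + η j k * P := by
        intro j k; nlinarith [mul_nonneg (hη j k).le hP]
      have hxiNN : ∀ (j : Fin G) (k : Fin (K j)),
          0 ≤ xiE η (fun j k => (τ:ℝ) * qup j k) j k := fun j k => xiE_nonneg hη heprop j k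
      have hAnn : ∀ (j : Fin G) (k : Fin (K j)),
          0 ≤ (N:ℝ) * qdl j * xiX η τ qup j k / (1 + η j k * (P - s + ∑ i, qdl i)) := by
        intro j k
        rw [hxiXE]
        exact div_nonneg (mul_nonneg (mul_nonneg (Nat.cast_nonneg N) (hqdl j)) (hxiNN j k))
          (hd1 j k).le
      have hkey : ∀ (j : Fin G) (k : Fin (K j)),
          (N:ℝ) * qdl j * xiX η τ qup j k / (1 + η j k * (P - s + ∑ i, qdl i)) ≤
          (N:ℝ) * ((s / (∑ j, qdl j)) * qdl j) * xiE η (fun j k => (τ:ℝ) * qup j k) j k /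
            (1 + η j k * P) := by
        intro j k
        rw [hxiXE, div_le_div_iff₀ (hd1 j k) (hd2 j k)]
        have hkey2 : 1 + η j k * P ≤
            (s / (∑ j, qdl j)) * (1 + η j k * (P - s + ∑ i, qdl i)) := by
          have h1 : 0 ≤ (s / (∑ j, qdl j) - 1) * (1 + η j k * (P - s)) := by
            have : (0:ℝ) ≤ 1 + η j k * (P - s) := by
              nlinarith [mul_nonneg (hη j k).le (by linarith : (0:ℝ) ≤ P - s)]
            nlinarith
          have h2 : η j k * ((s / (∑ j, qdl j)) * (∑ i, qdl i)) = η j k * s := by rw [hct]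
          nlinarith [h1, h2]
        calc (N:ℝ) * qdl j * xiE η (fun j k => (τ:ℝ) * qup j k) j k * (1 + η j k * P)
            ≤ (N:ℝ) * qdl j * xiE η (fun j k => (τ:ℝ) * qup j k) j k *
              ((s / (∑ j, qdl j)) * (1 + η j k * (P - s + ∑ i, qdl i))) := by
              exact mul_le_mul_of_nonneg_left hkey2
                (mul_nonneg (mul_nonneg (Nat.cast_nonneg N) (hqdl j)) (hxiNN j k))
          _ = (N:ℝ) * ((s / (∑ j, qdl j)) * qdl j) * xiE η (fun j k => (τ:ℝ) * qup j k) j k *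
              (1 + η j k * (P - s + ∑ i, qdl i)) := by ring
      have hInfNN : 0 ≤ ⨅ (j : Fin G), ⨅ (k : Fin (K j)),
          (N:ℝ) * qdl j * xiX η τ qup j k / (1 + η j k * (P - s + ∑ i, qdl i)) :=
        inf2_nonneg hG hK hAnn
      have hle := inf2_mono hG hK hkey
      exact mul_le_mul hfrac
        (Real.logb_le_logb_of_le one_lt_two (by linarith) (by linarith))
        (Real.logb_nonneg one_lt_two (by linarith)) hc0
    exact hstep.trans (mul_le_mul_of_nonneg_left (hmax _ _ he hq') hc0)

lemma red_un (hU : 0 < U) (hG : 0 < G) (hβ : ∀ m, 0 < β m) (hα : ∀ m, 0 ≤ α m) (hP : 0 ≤ P)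
    {u : ℝ} (hu0 : 0 ≤ u) (huP : u ≤ P)
    {F Pd : Fin U → ℝ}
    (hF : F ∈ boxU Eun) (hPd : Pd ∈ sliceS U u)
    (hmax : ∀ f p, f ∈ boxU Eun → p ∈ sliceS U u → GunF N P β α f p ≤ GunF N P β α F Pd)
    {τ : ℕ} {qup : ∀ j : Fin G, Fin (K j) → ℝ} {qdl : Fin G → ℝ} {pup pdl : Fin U → ℝ}
    (hfeas : feasX T P Emu Eun τ qup qdl pup pdl)
    (hpl : ∑ m, pdl m ≤ u) (hqe : ∑ j, qdl j = P - u) :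
    OunX N T β α τ pup pdl qdl ≤ (1 - ((U + G : ℕ) : ℝ) / (T : ℝ)) * GunF N P β α F Pd := by
  obtain ⟨hτ1, hτ2, hqdl, hpdl, hqup, hpup, hPow⟩ := hfeas
  have hT0 : (0:ℝ) < T := by
    have : 0 < T := lt_of_lt_of_le (Nat.lt_of_lt_of_le hG (Nat.le_add_left G U)) (le_trans hτ1 hτ2)
    exact_mod_cast this
  have hτT : (τ:ℝ) ≤ T := by exact_mod_cast hτ2
  have hτUG : ((U+G:ℕ):ℝ) ≤ (τ:ℝ) := by exact_mod_cast hτ1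
  have hfrac0 : 0 ≤ 1 - (τ:ℝ)/T := by
    rw [sub_nonneg]; exact div_le_one_of_le₀ hτT hT0.le
  have hfrac : 1 - (τ:ℝ)/(T:ℝ) ≤ 1 - ((U+G:ℕ):ℝ)/(T:ℝ) := by gcongr
  have hc0 : 0 ≤ 1 - ((U+G:ℕ):ℝ)/(T:ℝ) := le_trans hfrac0 hfrac
  have hFprops := mem_boxU.1 hF
  have hGFP : 0 ≤ GunF N P β α F Pd :=
    GunF_nonneg hβ hα hP (fun m => (hFprops m).1) hPd.1
  have hfprop : ∀ m, 0 ≤ (τ:ℝ) * pup m :=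
    fun m => mul_nonneg (Nat.cast_nonneg τ) (hpup m).1
  have hf : (fun m => (τ:ℝ) * pup m) ∈ boxU Eun :=
    mem_boxU.2 fun m => ⟨hfprop m, (hpup m).2⟩
  have ht0 : 0 ≤ ∑ m, pdl m := Finset.sum_nonneg fun m _ => hpdl m
  rcases eq_or_lt_of_le ht0 with h0 | hpos
  · have hp0 : ∀ m, pdl m = 0 := by
      intro m
      exact (Finset.sum_eq_zero_iff_of_nonneg (fun i _ => hpdl i)).1 h0.symm m (Finset.mem_univ m)
    rw [OunX_zero hp0]
    exact mul_nonneg hc0 hGFP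
  · have hts : (∑ m, pdl m) ≤ u := hpl
    have hct : (u / (∑ m, pdl m)) * (∑ m, pdl m) = u := div_mul_cancel₀ u (ne_of_gt hpos)
    have hc1 : 1 ≤ u / (∑ m, pdl m) := (one_le_div hpos).2 hts
    have hp' : (fun m => (u / (∑ m, pdl m)) * pdl m) ∈ sliceS U u :=
      ⟨fun m => mul_nonneg (le_trans zero_le_one hc1) (hpdl m),
        by rw [← Finset.mul_sum]; exact hct⟩
  -- step
    have hstep : OunX N T β α τ pup pdl qdl ≤
        (1 - ((U+G:ℕ):ℝ)/(T:ℝ)) *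
          GunF N P β α (fun m => (τ:ℝ) * pup m) (fun m => (u / (∑ m, pdl m)) * pdl m) := by
      unfold OunX GunF
      rw [hqe]
      have hthE : ∀ m, thetaX β τ pup m =
          (fun m => (τ:ℝ) * pup m) m * (β m) ^ 2 / (1 + (fun m => (τ:ℝ) * pup m) m * β m) :=
        fun m => rfl
      have hthNN : ∀ m, 0 ≤ (τ:ℝ) * pup m * (β m) ^ 2 / (1 + (τ:ℝ) * pup m * β m) := by
        intro m
        exact div_nonneg (mul_nonneg (hfprop m) (sq_nonneg _))
          (by nlinarith [mul_nonneg (hfprop m) (hβ m).le])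
      have hd1 : ∀ m, (0:ℝ) < 1 + β m * (∑ i, pdl i + (P - u)) := by
        intro m
        have h1 : (0:ℝ) ≤ ∑ i, pdl i + (P - u) := by linarith
        nlinarith [mul_nonneg (hβ m).le h1]
      have hd2 : ∀ m, (0:ℝ) < 1 + β m * P := by
        intro m; nlinarith [mul_nonneg (hβ m).le hP]
      have hterm : ∀ m ∈ Finset.univ (α := Fin U),
          α m * Real.logb 2 (1 + (N:ℝ) * pdl m * thetaX β τ pup m /
            (1 + β m * (∑ i, pdl i + (P - u)))) ≤
          α m * Real.logb 2 (1 + (N:ℝ) * ((u / (∑ m, pdl m)) * pdl m) *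
            ((fun m => (τ:ℝ) * pup m) m * (β m) ^ 2 / (1 + (fun m => (τ:ℝ) * pup m) m * β m)) /
            (1 + β m * P)) := by
        intro m _
        apply mul_le_mul_of_nonneg_left _ (hα m)
        have hANN : 0 ≤ (N:ℝ) * pdl m * thetaX β τ pup m /
            (1 + β m * (∑ i, pdl i + (P - u))) := by
          rw [hthE]
          exact div_nonneg (mul_nonneg (mul_nonneg (Nat.cast_nonneg N) (hpdl m)) (hthNN m))
            (hd1 m).le
        apply Real.logb_le_logb_of_le one_lt_two (by linarith)
        have hAB : (N:ℝ) * pdl m * thetaX β τ pup m / (1 + β m * (∑ i, pdl i + (P - u))) ≤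
            (N:ℝ) * ((u / (∑ m, pdl m)) * pdl m) *
            ((τ:ℝ) * pup m * (β m) ^ 2 / (1 + (τ:ℝ) * pup m * β m)) / (1 + β m * P) := by
          rw [hthE, div_le_div_iff₀ (hd1 m) (hd2 m)]
          have hkey2 : 1 + β m * P ≤
              (u / (∑ m, pdl m)) * (1 + β m * (∑ i, pdl i + (P - u))) := by
            have h1 : 0 ≤ (u / (∑ m, pdl m) - 1) * (1 + β m * (P - u)) := by
              have : (0:ℝ) ≤ 1 + β m * (P - u) := by
                nlinarith [mul_nonneg (hβ m).le (by linarith : (0:ℝ) ≤ P - u)]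
              nlinarith
            have h2 : β m * ((u / (∑ m, pdl m)) * (∑ i, pdl i)) = β m * u := by rw [hct]
            nlinarith [h1, h2]
          calc (N:ℝ) * pdl m * ((τ:ℝ) * pup m * (β m) ^ 2 / (1 + (τ:ℝ) * pup m * β m)) *
                (1 + β m * P)
              ≤ (N:ℝ) * pdl m * ((τ:ℝ) * pup m * (β m) ^ 2 / (1 + (τ:ℝ) * pup m * β m)) *
                ((u / (∑ m, pdl m)) * (1 + β m * (∑ i, pdl i + (P - u)))) := by
                exact mul_le_mul_of_nonneg_left hkey2
                  (mul_nonneg (mul_nonneg (Nat.cast_nonneg N) (hpdl m)) (hthNN m))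
            _ = (N:ℝ) * ((u / (∑ m, pdl m)) * pdl m) *
                ((τ:ℝ) * pup m * (β m) ^ 2 / (1 + (τ:ℝ) * pup m * β m)) *
                (1 + β m * (∑ i, pdl i + (P - u))) := by ring
        linarith
      have hsum := Finset.sum_le_sum hterm
      have hsumNN : 0 ≤ ∑ m, α m * Real.logb 2 (1 + (N:ℝ) * pdl m * thetaX β τ pup m /
          (1 + β m * (∑ i, pdl i + (P - u)))) := by
        apply Finset.sum_nonneg
        intro m _
        apply mul_nonneg (hα m)
        apply Real.logb_nonneg one_lt_two
        have hANN : 0 ≤ (N:ℝ) * pdl m * thetaX β τ pup m /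
            (1 + β m * (∑ i, pdl i + (P - u))) := by
          rw [hthE]
          exact div_nonneg (mul_nonneg (mul_nonneg (Nat.cast_nonneg N) (hpdl m)) (hthNN m))
            (hd1 m).le
        linarith
      exact mul_le_mul hfrac hsum hsumNN hc0
    exact hstep.trans (mul_le_mul_of_nonneg_left (hmax _ _ hf hp') hc0)

end reduction

/- ========= witness computations and value characterizations ========= -/

section char
variable {η Emu : ∀ j : Fin G, Fin (K j) → ℝ} {β Eun α : Fin U → ℝ} {N T : ℕ} {P : ℝ}

lemma OmuX_witness (hUG : 0 < U + G)
    {E : ∀ j : Fin G, Fin (K j) → ℝ} {qdl : Fin G → ℝ} {pdl : Fin U → ℝ}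
    (hsum : ∑ m, pdl m + ∑ j, qdl j = P) :
    OmuX N T η (U + G) (fun j k => E j k / ((U + G : ℕ) : ℝ)) qdl pdl =
      (1 - ((U + G : ℕ) : ℝ) / (T : ℝ)) * GmuF N P η E qdl := by
  have hτ : ((U + G : ℕ) : ℝ) ≠ 0 := Nat.cast_ne_zero.2 hUG.ne'
  have h1 : ∀ (j : Fin G) (k : Fin (K j)),
      ((U + G : ℕ) : ℝ) * (E j k / ((U + G : ℕ) : ℝ)) = E j k := by
    intro j k; rw [mul_comm, div_mul_cancel₀ _ hτ]
  unfold OmuX GmuF xiX xiE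
  rw [hsum]
  simp only [h1]

lemma OunX_witness (hUG : 0 < U + G)
    {F : Fin U → ℝ} {qdl : Fin G → ℝ} {pdl : Fin U → ℝ}
    (hsum : ∑ m, pdl m + ∑ j, qdl j = P) :
    OunX N T β α (U + G) (fun m => F m / ((U + G : ℕ) : ℝ)) pdl qdl =
      (1 - ((U + G : ℕ) : ℝ) / (T : ℝ)) * GunF N P β α F pdl := by
  have hτ : ((U + G : ℕ) : ℝ) ≠ 0 := Nat.cast_ne_zero.2 hUG.ne'
  have h1 : ∀ m : Fin U, ((U + G : ℕ) : ℝ) * (F m / ((U + G : ℕ) : ℝ)) = F m := by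
    intro m; rw [mul_comm, div_mul_cancel₀ _ hτ]
  unfold OunX GunF thetaX
  rw [hsum]
  simp only [h1]

lemma feas_witness (hG : 0 < G) (hT : U + G ≤ T)
    {E : ∀ j : Fin G, Fin (K j) → ℝ} {Q : Fin G → ℝ} {Fp : Fin U → ℝ} {Pd : Fin U → ℝ}
    (hE : E ∈ boxE Emu) (hQ : ∀ j, 0 ≤ Q j) (hF : Fp ∈ boxU Eun) (hPd : ∀ m, 0 ≤ Pd m)
    (hsum : ∑ m, Pd m + ∑ j, Q j ≤ P) :
    feasX T P Emu Eun (U + G) (fun j k => E j k / ((U + G : ℕ) : ℝ)) Q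
      (fun m => Fp m / ((U + G : ℕ) : ℝ)) Pd := by
  have hUG : 0 < U + G := Nat.lt_of_lt_of_le hG (Nat.le_add_left G U)
  have hτpos : (0:ℝ) < ((U + G : ℕ) : ℝ) := by exact_mod_cast hUG
  have h1 : ∀ x : ℝ, ((U + G : ℕ) : ℝ) * (x / ((U + G : ℕ) : ℝ)) = x := by
    intro x; rw [mul_comm, div_mul_cancel₀ _ hτpos.ne']
  refine ⟨le_refl _, hT, hQ, hPd, ?_, ?_, hsum⟩
  · intro j k
    exact ⟨div_nonneg (mem_boxE.1 hE j k).1 hτpos.le, by rw [h1]; exact (mem_boxE.1 hE j k).2⟩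
  · intro m
    exact ⟨div_nonneg (mem_boxU.1 hF m).1 hτpos.le, by rw [h1]; exact (mem_boxU.1 hF m).2⟩

lemma Vmu_char (hU : 0 < U) (hG : 0 < G) (hK : ∀ j, 0 < K j) (hη : ∀ j k, 0 < η j k)
    (hEmu : ∀ j k, 0 ≤ Emu j k) (hEun : ∀ m, 0 ≤ Eun m) (hT : U + G ≤ T)
    (hP : 0 ≤ P) {s : ℝ} (hs : s ∈ Set.Icc (0:ℝ) P) :
    ∃ E Q, E ∈ boxE Emu ∧ Q ∈ sliceS G s ∧
      (∀ e q, e ∈ boxE Emu → q ∈ sliceS G s → GmuF N P η e q ≤ GmuF N P η E Q) ∧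
      VmuX N T P η Emu β Eun α s = (1 - ((U + G : ℕ) : ℝ) / (T : ℝ)) * GmuF N P η E Q := by
  obtain ⟨E, Q, hE, hQ, hmax⟩ := exists_max_mu hG hK hη hEmu hP hs.1
  refine ⟨E, Q, hE, hQ, hmax, ?_⟩
  have hUG : 0 < U + G := Nat.lt_of_lt_of_le hG (Nat.le_add_left G U)
  have hPdmem := sliceS_uniform_mem hU (by linarith [hs.2] : (0:ℝ) ≤ P - s)
  have hF0 : (fun _ : Fin U => (0:ℝ)) ∈ boxU Eun := mem_boxU.2 fun m => ⟨le_refl _, hEun m⟩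
  have hsumP : ∑ m, (fun _ : Fin U => (P - s)/(U:ℝ)) m + ∑ j, Q j = P := by
    rw [hPdmem.2, hQ.2]; ring
  have hfeasw := feas_witness hG hT hE hQ.1 hF0 hPdmem.1 (le_of_eq hsumP)
  have hmemw : (1 - ((U + G : ℕ) : ℝ) / (T : ℝ)) * GmuF N P η E Q ∈
      {v : ℝ | ∃ (τ : ℕ) (qup : ∀ j : Fin G, Fin (K j) → ℝ) (qdl : Fin G → ℝ)
        (pup pdl : Fin U → ℝ),
        feasX T P Emu Eun τ qup qdl pup pdl ∧
        (∑ j, qdl j ≤ s) ∧ (∑ m, pdl m = P - s) ∧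
        v = OmuX N T η τ qup qdl pdl} := by
    exact ⟨U + G, fun j k => E j k / ((U + G : ℕ) : ℝ), Q,
      fun m => (0:ℝ) / ((U + G : ℕ) : ℝ), fun _ => (P - s)/(U:ℝ), hfeasw,
      le_of_eq hQ.2, hPdmem.2, (OmuX_witness hUG hsumP).symm⟩
  have hub : ∀ v ∈ {v : ℝ | ∃ (τ : ℕ) (qup : ∀ j : Fin G, Fin (K j) → ℝ) (qdl : Fin G → ℝ)
        (pup pdl : Fin U → ℝ),
        feasX T P Emu Eun τ qup qdl pup pdl ∧
        (∑ j, qdl j ≤ s) ∧ (∑ m, pdl m = P - s) ∧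
        v = OmuX N T η τ qup qdl pdl},
      v ≤ (1 - ((U + G : ℕ) : ℝ) / (T : ℝ)) * GmuF N P η E Q := by
    rintro v ⟨τ, qup, qdl, pup, pdl, hfe, hq, hp, rfl⟩
    exact red_mu hG hK hη hP hs.1 hs.2 hE hQ hmax hfe hq hp
  exact le_antisymm (csSup_le ⟨_, hmemw⟩ hub) (le_csSup ⟨_, fun v hv => hub v hv⟩ hmemw)

lemma Vun_char (hU : 0 < U) (hG : 0 < G) (hK : ∀ j, 0 < K j) (hβ : ∀ m, 0 < β m)
    (hα : ∀ m, 0 ≤ α m)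
    (hEmu : ∀ j k, 0 ≤ Emu j k) (hEun : ∀ m, 0 ≤ Eun m) (hT : U + G ≤ T)
    (hP : 0 ≤ P) {u : ℝ} (hu : u ∈ Set.Icc (0:ℝ) P) :
    ∃ F Pd, F ∈ boxU Eun ∧ Pd ∈ sliceS U u ∧
      (∀ f p, f ∈ boxU Eun → p ∈ sliceS U u → GunF N P β α f p ≤ GunF N P β α F Pd) ∧
      VunX N T P η Emu β Eun α u = (1 - ((U + G : ℕ) : ℝ) / (T : ℝ)) * GunF N P β α F Pd := by
  obtain ⟨F, Pd, hF, hPd, hmax⟩ := exists_max_un hU hβ hEun hP hu.1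
  refine ⟨F, Pd, hF, hPd, hmax, ?_⟩
  have hUG : 0 < U + G := Nat.lt_of_lt_of_le hG (Nat.le_add_left G U)
  have hQmem := sliceS_uniform_mem hG (by linarith [hu.2] : (0:ℝ) ≤ P - u)
  have hE0 : (fun _ : Fin G => fun _ => (0:ℝ)) ∈ boxE Emu :=
    mem_boxE.2 fun j k => ⟨le_refl _, hEmu j k⟩
  have hsumP : ∑ m, Pd m + ∑ j, (fun _ : Fin G => (P - u)/(G:ℝ)) j = P := by
    rw [hPd.2, hQmem.2]; ring
  have hfeasw := feas_witness hG hT hE0 hQmem.1 hF hPd.1 (le_of_eq hsumP)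
  have hmemw : (1 - ((U + G : ℕ) : ℝ) / (T : ℝ)) * GunF N P β α F Pd ∈
      {v : ℝ | ∃ (τ : ℕ) (qup : ∀ j : Fin G, Fin (K j) → ℝ) (qdl : Fin G → ℝ)
        (pup pdl : Fin U → ℝ),
        feasX T P Emu Eun τ qup qdl pup pdl ∧
        (∑ m, pdl m ≤ u) ∧ (∑ j, qdl j = P - u) ∧
        v = OunX N T β α τ pup pdl qdl} := by
    exact ⟨U + G, fun j k => (0:ℝ) / ((U + G : ℕ) : ℝ), fun _ => (P - u)/(G:ℝ),
      fun m => F m / ((U + G : ℕ) : ℝ), Pd, hfeasw,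
      le_of_eq hPd.2, hQmem.2, (OunX_witness hUG hsumP).symm⟩
  have hub : ∀ v ∈ {v : ℝ | ∃ (τ : ℕ) (qup : ∀ j : Fin G, Fin (K j) → ℝ) (qdl : Fin G → ℝ)
        (pup pdl : Fin U → ℝ),
        feasX T P Emu Eun τ qup qdl pup pdl ∧
        (∑ m, pdl m ≤ u) ∧ (∑ j, qdl j = P - u) ∧
        v = OunX N T β α τ pup pdl qdl},
      v ≤ (1 - ((U + G : ℕ) : ℝ) / (T : ℝ)) * GunF N P β α F Pd := by
    rintro v ⟨τ, qup, qdl, pup, pdl, hfe, hq, hp, rfl⟩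
    exact red_un hU hG hβ hα hP hu.1 hu.2 hF hPd hmax hfe hq hp
  exact le_antisymm (csSup_le ⟨_, hmemw⟩ hub) (le_csSup ⟨_, fun v hv => hub v hv⟩ hmemw)

end char

/- ========= strict monotonicity ========= -/

section mono
variable {η Emu : ∀ j : Fin G, Fin (K j) → ℝ} {β Eun α : Fin U → ℝ} {N T : ℕ} {P : ℝ}

lemma c0_pos (hTlt : U + G < T) : (0:ℝ) < 1 - ((U + G : ℕ) : ℝ) / (T : ℝ) := by
  have h1 : ((U + G : ℕ) : ℝ) < (T : ℝ) := by exact_mod_cast hTlt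
  have h2 : (0:ℝ) < T := lt_of_le_of_lt (Nat.cast_nonneg _) h1
  rw [sub_pos]
  exact (div_lt_one h2).2 h1

lemma Vmu_lt (hU : 0 < U) (hG : 0 < G) (hK : ∀ j, 0 < K j) (hη : ∀ j k, 0 < η j k)
    (hEmu : ∀ j k, 0 < Emu j k) (hEun : ∀ m, 0 ≤ Eun m) (hN : 0 < N)
    (hTlt : U + G < T) (hP : 0 ≤ P)
    {s s' : ℝ} (hs0 : 0 ≤ s) (hss' : s < s') (hs'P : s' ≤ P) :
    VmuX N T P η Emu β Eun α s < VmuX N T P η Emu β Eun α s' := by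
  have hT : U + G ≤ T := hTlt.le
  have hc0pos := c0_pos (U := U) (G := G) hTlt
  have hEmu' : ∀ j k, 0 ≤ Emu j k := fun j k => (hEmu j k).le
  obtain ⟨E, Q, hE, hQ, hmaxEQ, hVs⟩ :=
    Vmu_char (N := N) (β := β) (α := α) hU hG hK hη hEmu' hEun hT hP
      ⟨hs0, le_trans hss'.le hs'P⟩
  obtain ⟨E', Q', hE', hQ', hmax', hVs'⟩ :=
    Vmu_char (N := N) (β := β) (α := α) hU hG hK hη hEmu' hEun hT hP
      ⟨le_trans hs0 hss'.le, hs'P⟩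
  have hEnn : ∀ j k, 0 ≤ E j k := fun j k => (mem_boxE.1 hE j k).1
  have hm0 : 0 ≤ ⨅ j, ⨅ k, (N:ℝ) * Q j * xiE η E j k / (1 + η j k * P) :=
    inf2_nonneg hG hK (fun j k => sinr_mu_nonneg hη hP hEnn hQ.1 j k)
  have hd2 : ∀ (j : Fin G) (k : Fin (K j)), (0:ℝ) < 1 + η j k * P := by
    intro j k; nlinarith [mul_nonneg (hη j k).le hP]
  rcases eq_or_lt_of_le hm0 with hmz | hmpos
  · -- value at s is zero, value at s' is positive
    have h0 : GmuF N P η E Q = 0 := by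
      unfold GmuF
      rw [← hmz, add_zero, Real.logb_one]
    rw [hVs, hVs', h0, mul_zero]
    apply mul_pos hc0pos
    have hEmumem : Emu ∈ boxE Emu := mem_boxE.2 fun j k => ⟨(hEmu j k).le, le_refl _⟩
    have hs'0 : 0 < s' := lt_of_le_of_lt hs0 hss'
    have hunif := sliceS_uniform_mem hG hs'0.le
    have hpos : 0 < GmuF N P η Emu (fun _ => s'/(G:ℝ)) := by
      apply Real.logb_pos one_lt_two
      have hintpos : 0 < ⨅ (j : Fin G), ⨅ (k : Fin (K j)),
          (N:ℝ) * (fun _ : Fin G => s'/(G:ℝ)) j * xiE η Emu j k / (1 + η j k * P) := by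
        apply inf2_pos hG hK
        intro j k
        have hGpos : (0:ℝ) < G := by exact_mod_cast hG
        exact div_pos (mul_pos (mul_pos (by exact_mod_cast hN) (by positivity))
          (xiE_pos hη hEmu' j k (hEmu j k))) (hd2 j k)
      linarith
    exact lt_of_lt_of_le hpos (hmax' Emu _ hEmumem hunif)
  · -- scaling argument
    have hQpos : ∀ j, 0 < Q j := by
      intro j
      by_contra hcon
      push_neg at hcon
      have hQj : Q j = 0 := le_antisymm hcon (hQ.1 j)
      have h1 := inf2_le (f := fun j k => (N:ℝ) * Q j * xiE η E j k / (1 + η j k * P))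
        j ⟨0, hK j⟩
      rw [hQj, mul_zero, zero_mul, zero_div] at h1
      linarith
    have hspos : 0 < s := by
      rw [← hQ.2]
      exact Finset.sum_pos (fun j _ => hQpos j) ⟨⟨0, hG⟩, Finset.mem_univ _⟩
    have hc1 : 1 < s'/s := (one_lt_div hspos).2 hss'
    have hQ'' : (fun j => (s'/s) * Q j) ∈ sliceS G s' :=
      ⟨fun j => mul_nonneg (by positivity) (hQ.1 j),
        by rw [← Finset.mul_sum, hQ.2]; exact div_mul_cancel₀ s' hspos.ne'⟩
    have hlow : ∀ (j : Fin G) (k : Fin (K j)),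
        (s'/s) * (⨅ j, ⨅ k, (N:ℝ) * Q j * xiE η E j k / (1 + η j k * P)) ≤
        (N:ℝ) * ((s'/s) * Q j) * xiE η E j k / (1 + η j k * P) := by
      intro j k
      have h1 : (⨅ j, ⨅ k, (N:ℝ) * Q j * xiE η E j k / (1 + η j k * P)) ≤
          (N:ℝ) * Q j * xiE η E j k / (1 + η j k * P) := inf2_le j k
      have h2 : (N:ℝ) * ((s'/s) * Q j) * xiE η E j k / (1 + η j k * P) =
          (s'/s) * ((N:ℝ) * Q j * xiE η E j k / (1 + η j k * P)) := by ring
      rw [h2]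
      exact mul_le_mul_of_nonneg_left h1 (by positivity)
    have hinf := le_inf2 hG hK hlow
    have hglt : GmuF N P η E Q < GmuF N P η E (fun j => (s'/s) * Q j) := by
      unfold GmuF
      have hstep1 : Real.logb 2
          (1 + ⨅ j, ⨅ k, (N:ℝ) * Q j * xiE η E j k / (1 + η j k * P)) <
          Real.logb 2 (1 + (s'/s) *
            (⨅ j, ⨅ k, (N:ℝ) * Q j * xiE η E j k / (1 + η j k * P))) := by
        apply Real.logb_lt_logb one_lt_two (by linarith)
        nlinarith
      exact lt_of_lt_of_le hstep1
        (Real.logb_le_logb_of_le one_lt_two (by nlinarith) (by linarith))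
    rw [hVs, hVs']
    exact mul_lt_mul_of_pos_left (lt_of_lt_of_le hglt (hmax' E _ hE hQ'')) hc0pos

lemma Vun_lt (hU : 0 < U) (hG : 0 < G) (hK : ∀ j, 0 < K j) (hβ : ∀ m, 0 < β m)
    (hα : ∀ m, 0 < α m) (hEmu : ∀ j k, 0 ≤ Emu j k) (hEun : ∀ m, 0 < Eun m) (hN : 0 < N)
    (hTlt : U + G < T) (hP : 0 ≤ P)
    {u u' : ℝ} (hu0 : 0 ≤ u) (huu' : u < u') (hu'P : u' ≤ P) :
    VunX N T P η Emu β Eun α u < VunX N T P η Emu β Eun α u' := by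
  have hT : U + G ≤ T := hTlt.le
  have hc0pos := c0_pos (U := U) (G := G) hTlt
  have hα' : ∀ m, 0 ≤ α m := fun m => (hα m).le
  have hEun' : ∀ m, 0 ≤ Eun m := fun m => (hEun m).le
  obtain ⟨F, Pd, hF, hPd, hmaxFP, hVu⟩ :=
    Vun_char (N := N) (η := η) hU hG hK hβ hα' hEmu hEun' hT hP ⟨hu0, le_trans huu'.le hu'P⟩
  obtain ⟨F', Pd', hF', hPd', hmax', hVu'⟩ :=
    Vun_char (N := N) (η := η) hU hG hK hβ hα' hEmu hEun' hT hP ⟨le_trans hu0 huu'.le, hu'P⟩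
  have hFnn : ∀ m, 0 ≤ F m := fun m => (mem_boxU.1 hF m).1
  have hd2 : ∀ m, (0:ℝ) < 1 + β m * P := by
    intro m; nlinarith [mul_nonneg (hβ m).le hP]
  have hGnn : 0 ≤ GunF N P β α F Pd := GunF_nonneg hβ hα' hP hFnn hPd.1
  have hAnn : ∀ m, 0 ≤ (N:ℝ) * Pd m * (F m * (β m) ^ 2 / (1 + F m * β m)) / (1 + β m * P) :=
    fun m => sinr_un_nonneg hβ hP hFnn hPd.1 m
  rcases eq_or_lt_of_le hGnn with hz | hpos2
  · -- value at u is zero, value at u' is positive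
    rw [hVu, hVu', ← hz, mul_zero]
    apply mul_pos hc0pos
    have hEunmem : Eun ∈ boxU Eun := mem_boxU.2 fun m => ⟨(hEun m).le, le_refl _⟩
    have hu'0 : 0 < u' := lt_of_le_of_lt hu0 huu'
    have hunif := sliceS_uniform_mem hU hu'0.le
    have hpos : 0 < GunF N P β α Eun (fun _ => u'/(U:ℝ)) := by
      apply Finset.sum_pos _ ⟨⟨0, hU⟩, Finset.mem_univ _⟩
      intro m _
      apply mul_pos (hα m)
      apply Real.logb_pos one_lt_two
      have hUpos : (0:ℝ) < U := by exact_mod_cast hU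
      have hθ : 0 < Eun m * (β m) ^ 2 / (1 + Eun m * β m) := by
        apply div_pos (mul_pos (hEun m) (pow_pos (hβ m) 2))
        nlinarith [mul_nonneg (hEun m).le (hβ m).le]
      have : 0 < (N:ℝ) * ((fun _ : Fin U => u'/(U:ℝ)) m) *
          (Eun m * (β m) ^ 2 / (1 + Eun m * β m)) / (1 + β m * P) :=
        div_pos (mul_pos (mul_pos (by exact_mod_cast hN) (by positivity)) hθ) (hd2 m)
      linarith
    exact lt_of_lt_of_le hpos (hmax' Eun _ hEunmem hunif)
  · -- scaling argument
    obtain ⟨m0, hm0⟩ : ∃ m0, 0 < α m0 * Real.logb 2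
        (1 + (N:ℝ) * Pd m0 * (F m0 * (β m0) ^ 2 / (1 + F m0 * β m0)) / (1 + β m0 * P)) := by
      by_contra hcon
      push_neg at hcon
      have : GunF N P β α F Pd ≤ 0 := Finset.sum_nonpos fun m _ => hcon m
      linarith
    have hL0 : 0 < Real.logb 2
        (1 + (N:ℝ) * Pd m0 * (F m0 * (β m0) ^ 2 / (1 + F m0 * β m0)) / (1 + β m0 * P)) := by
      by_contra hcon
      push_neg at hcon
      nlinarith [hα m0]
    have hApos : 0 < (N:ℝ) * Pd m0 * (F m0 * (β m0) ^ 2 / (1 + F m0 * β m0)) /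
        (1 + β m0 * P) := by
      rcases eq_or_lt_of_le (hAnn m0) with h | h
      · rw [← h, add_zero, Real.logb_one] at hL0
        exact absurd hL0 (lt_irrefl 0)
      · exact h
    have hPdm0 : 0 < Pd m0 := by
      rcases eq_or_lt_of_le (hPd.1 m0) with h | h
      · rw [← h, mul_zero, zero_mul, zero_div] at hApos
        exact absurd hApos (lt_irrefl 0)
      · exact h
    have hupos : 0 < u := by
      rw [← hPd.2]
      exact lt_of_lt_of_le hPdm0 (Finset.single_le_sum (fun m _ => hPd.1 m) (Finset.mem_univ m0))
    have hc1 : 1 < u'/u := (one_lt_div hupos).2 huu'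
    have hP'' : (fun m => (u'/u) * Pd m) ∈ sliceS U u' :=
      ⟨fun m => mul_nonneg (by positivity) (hPd.1 m),
        by rw [← Finset.mul_sum, hPd.2]; exact div_mul_cancel₀ u' hupos.ne'⟩
    have hglt : GunF N P β α F Pd < GunF N P β α F (fun m => (u'/u) * Pd m) := by
      unfold GunF
      apply Finset.sum_lt_sum
      · intro m _
        apply mul_le_mul_of_nonneg_left _ (hα' m)
        have h2 : (N:ℝ) * ((u'/u) * Pd m) * (F m * (β m) ^ 2 / (1 + F m * β m)) /
            (1 + β m * P) = (u'/u) *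
            ((N:ℝ) * Pd m * (F m * (β m) ^ 2 / (1 + F m * β m)) / (1 + β m * P)) := by ring
        rw [h2]
        apply Real.logb_le_logb_of_le one_lt_two (by linarith [hAnn m])
        nlinarith [hAnn m]
      · refine ⟨m0, Finset.mem_univ _, ?_⟩
        apply mul_lt_mul_of_pos_left _ (hα m0)
        have h2 : (N:ℝ) * ((u'/u) * Pd m0) * (F m0 * (β m0) ^ 2 / (1 + F m0 * β m0)) /
            (1 + β m0 * P) = (u'/u) *
            ((N:ℝ) * Pd m0 * (F m0 * (β m0) ^ 2 / (1 + F m0 * β m0)) / (1 + β m0 * P)) := by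
          ring
        rw [h2]
        apply Real.logb_lt_logb one_lt_two (by linarith)
        nlinarith
    rw [hVu, hVu']
    exact mul_lt_mul_of_pos_left (lt_of_lt_of_le hglt (hmax' F _ hF hP'')) hc0pos

lemma Vmu_le (hU : 0 < U) (hG : 0 < G) (hK : ∀ j, 0 < K j) (hη : ∀ j k, 0 < η j k)
    (hEmu : ∀ j k, 0 < Emu j k) (hEun : ∀ m, 0 ≤ Eun m) (hN : 0 < N)
    (hTlt : U + G < T) (hP : 0 ≤ P)
    {s s' : ℝ} (hs0 : 0 ≤ s) (hss' : s ≤ s') (hs'P : s' ≤ P) :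
    VmuX N T P η Emu β Eun α s ≤ VmuX N T P η Emu β Eun α s' := by
  rcases eq_or_lt_of_le hss' with rfl | h
  · exact le_refl _
  · exact (Vmu_lt hU hG hK hη hEmu hEun hN hTlt hP hs0 h hs'P).le

lemma Vun_le (hU : 0 < U) (hG : 0 < G) (hK : ∀ j, 0 < K j) (hβ : ∀ m, 0 < β m)
    (hα : ∀ m, 0 < α m) (hEmu : ∀ j k, 0 ≤ Emu j k) (hEun : ∀ m, 0 < Eun m) (hN : 0 < N)
    (hTlt : U + G < T) (hP : 0 ≤ P)
    {u u' : ℝ} (hu0 : 0 ≤ u) (huu' : u ≤ u') (hu'P : u' ≤ P) :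
    VunX N T P η Emu β Eun α u ≤ VunX N T P η Emu β Eun α u' := by
  rcases eq_or_lt_of_le huu' with rfl | h
  · exact le_refl _
  · exact (Vun_lt hU hG hK hβ hα hEmu hEun hN hTlt hP hu0 h hu'P).le

end mono

/- ========= every attainable point is dominated by a curve point ========= -/

section dominate
variable {η Emu : ∀ j : Fin G, Fin (K j) → ℝ} {β Eun α : Fin U → ℝ} {N T : ℕ} {P : ℝ}

lemma c0_nonneg (hG : 0 < G) (hT : U + G ≤ T) :
    (0:ℝ) ≤ 1 - ((U + G : ℕ) : ℝ) / (T : ℝ) := by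
  have hT0 : 0 < T := lt_of_lt_of_le (Nat.lt_of_lt_of_le hG (Nat.le_add_left G U)) hT
  have h1 : ((U + G : ℕ) : ℝ) ≤ (T : ℝ) := by exact_mod_cast hT
  have h2 : (0:ℝ) < T := by exact_mod_cast hT0
  rw [sub_nonneg]
  exact div_le_one_of_le₀ h1 h2.le

lemma scale_dominates (hU : 0 < U) (hG : 0 < G) (hK : ∀ j, 0 < K j)
    (hη : ∀ j k, 0 < η j k) (hβ : ∀ m, 0 < β m) (hα : ∀ m, 0 ≤ α m)
    (hEmu : ∀ j k, 0 ≤ Emu j k) (hEun : ∀ m, 0 ≤ Eun m) (hT : U + G ≤ T)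
    {τ : ℕ} {qup : ∀ j : Fin G, Fin (K j) → ℝ} {qdl : Fin G → ℝ} {pup pdl : Fin U → ℝ}
    (hfeas : feasX T P Emu Eun τ qup qdl pup pdl) :
    ∃ s ∈ Set.Icc (0:ℝ) P,
      OmuX N T η τ qup qdl pdl ≤ VmuX N T P η Emu β Eun α s ∧
      OunX N T β α τ pup pdl qdl ≤ VunX N T P η Emu β Eun α (P - s) := by
  obtain ⟨hτ1, hτ2, hqdl, hpdl, hqup, hpup, hPow⟩ := hfeas
  have hr0 : 0 ≤ ∑ m, pdl m := Finset.sum_nonneg fun m _ => hpdl m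
  have ht0 : 0 ≤ ∑ j, qdl j := Finset.sum_nonneg fun j _ => hqdl j
  have hP0 : 0 ≤ P := le_trans (add_nonneg hr0 ht0) hPow
  have hc0 := c0_nonneg (U := U) hG hT
  have hT0 : (0:ℝ) < T := by
    have : 0 < T := lt_of_lt_of_le (Nat.lt_of_lt_of_le hG (Nat.le_add_left G U)) hT
    exact_mod_cast this
  have hfrac0 : 0 ≤ 1 - (τ:ℝ)/(T:ℝ) := by
    rw [sub_nonneg]
    exact div_le_one_of_le₀ (by exact_mod_cast hτ2) hT0.le
  rcases eq_or_lt_of_le (add_nonneg hr0 ht0) with h0 | hpos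
  · -- everything is zero
    have hq0 : ∀ j, qdl j = 0 := by
      intro j
      have h1 : ∑ j, qdl j = 0 := by linarith
      exact (Finset.sum_eq_zero_iff_of_nonneg (fun i _ => hqdl i)).1 h1 j (Finset.mem_univ j)
    have hp0 : ∀ m, pdl m = 0 := by
      intro m
      have h1 : ∑ m, pdl m = 0 := by linarith
      exact (Finset.sum_eq_zero_iff_of_nonneg (fun i _ => hpdl i)).1 h1 m (Finset.mem_univ m)
    refine ⟨0, ⟨le_refl _, hP0⟩, ?_, ?_⟩
    · rw [OmuX_zero hG hK hq0]
      obtain ⟨E, Q, hE, hQ, -, hVs⟩ :=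
        Vmu_char (N := N) (β := β) (α := α) hU hG hK hη hEmu hEun hT hP0
          ⟨le_refl (0:ℝ), hP0⟩
      rw [hVs]
      exact mul_nonneg hc0 (GmuF_nonneg hG hK hη hP0 (fun j k => (mem_boxE.1 hE j k).1) hQ.1)
    · rw [OunX_zero hp0]
      obtain ⟨F, Pd, hF, hPd, -, hVu⟩ :=
        Vun_char (N := N) (η := η) hU hG hK hβ hα hEmu hEun hT hP0
          ⟨by linarith, by linarith⟩ (u := P - 0)
      rw [hVu]
      exact mul_nonneg hc0 (GunF_nonneg hβ hα hP0 (fun m => (mem_boxU.1 hF m).1) hPd.1)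
  · -- scale up to full power
    have hc1 : 1 ≤ P / (∑ m, pdl m + ∑ j, qdl j) := (one_le_div hpos).2 hPow
    set c : ℝ := P / (∑ m, pdl m + ∑ j, qdl j) with hc_def
    have hcrt : c * (∑ m, pdl m + ∑ j, qdl j) = P := div_mul_cancel₀ P (ne_of_gt hpos)
    have hsum' : ∑ m, c * pdl m + ∑ j, c * qdl j = P := by
      rw [← Finset.mul_sum, ← Finset.mul_sum, ← mul_add]
      exact hcrt
    have hs0 : 0 ≤ c * ∑ j, qdl j := mul_nonneg (le_trans zero_le_one hc1) ht0
    have hsP : c * ∑ j, qdl j ≤ P := by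
      have h2 : 0 ≤ c * ∑ m, pdl m := mul_nonneg (le_trans zero_le_one hc1) hr0
      nlinarith [hcrt]
    have hPs : P - c * ∑ j, qdl j = c * ∑ m, pdl m := by nlinarith [hcrt]
    have hfeas' : feasX T P Emu Eun τ qup (fun j => c * qdl j) pup (fun m => c * pdl m) :=
      ⟨hτ1, hτ2, fun j => mul_nonneg (le_trans zero_le_one hc1) (hqdl j),
        fun m => mul_nonneg (le_trans zero_le_one hc1) (hpdl m), hqup, hpup,
        le_of_eq hsum'⟩
    refine ⟨c * ∑ j, qdl j, ⟨hs0, hsP⟩, ?_, ?_⟩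
    · -- multicast side
      obtain ⟨E, Q, hE, hQ, hmax, hVs⟩ :=
        Vmu_char (N := N) (β := β) (α := α) hU hG hK hη hEmu hEun hT hP0 ⟨hs0, hsP⟩
      have hred := red_mu hG hK hη hP0 hs0 hsP hE hQ hmax hfeas'
        (le_of_eq (Finset.mul_sum _ _ _).symm) (by rw [hPs]; exact (Finset.mul_sum _ _ _).symm)
      rw [hVs]
      refine le_trans ?_ hred
      -- OmuX x ≤ OmuX x'
      unfold OmuX
      apply mul_le_mul_of_nonneg_left _ hfrac0
      have hxiNN : ∀ (j : Fin G) (k : Fin (K j)), 0 ≤ xiX η τ qup j k := by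
        intro j k
        exact xiE_nonneg hη (fun j k => mul_nonneg (Nat.cast_nonneg τ) (hqup j k).1) j k
      have hd1 : ∀ (j : Fin G) (k : Fin (K j)),
          (0:ℝ) < 1 + η j k * (∑ m, pdl m + ∑ i, qdl i) := by
        intro j k
        nlinarith [mul_nonneg (hη j k).le (add_nonneg hr0 ht0)]
      have hd2 : ∀ (j : Fin G) (k : Fin (K j)),
          (0:ℝ) < 1 + η j k * (∑ m, c * pdl m + ∑ i, c * qdl i) := by
        intro j k
        rw [hsum']
        nlinarith [mul_nonneg (hη j k).le hP0]
      have hAnn : ∀ (j : Fin G) (k : Fin (K j)),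
          0 ≤ (N:ℝ) * qdl j * xiX η τ qup j k / (1 + η j k * (∑ m, pdl m + ∑ i, qdl i)) := by
        intro j k
        exact div_nonneg (mul_nonneg (mul_nonneg (Nat.cast_nonneg N) (hqdl j)) (hxiNN j k))
          (hd1 j k).le
      have hkey : ∀ (j : Fin G) (k : Fin (K j)),
          (N:ℝ) * qdl j * xiX η τ qup j k / (1 + η j k * (∑ m, pdl m + ∑ i, qdl i)) ≤
          (N:ℝ) * (c * qdl j) * xiX η τ qup j k /
            (1 + η j k * (∑ m, c * pdl m + ∑ i, c * qdl i)) := by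
        intro j k
        rw [div_le_div_iff₀ (hd1 j k) (hd2 j k), hsum']
        have h2 : η j k * (c * (∑ m, pdl m + ∑ j, qdl j)) = η j k * P := by rw [hcrt]
        have hkey2 : 1 + η j k * P ≤ c * (1 + η j k * (∑ m, pdl m + ∑ i, qdl i)) := by
          nlinarith [h2, hc1]
        calc (N:ℝ) * qdl j * xiX η τ qup j k * (1 + η j k * P)
            ≤ (N:ℝ) * qdl j * xiX η τ qup j k *
              (c * (1 + η j k * (∑ m, pdl m + ∑ i, qdl i))) :=
              mul_le_mul_of_nonneg_left hkey2
                (mul_nonneg (mul_nonneg (Nat.cast_nonneg N) (hqdl j)) (hxiNN j k))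
          _ = (N:ℝ) * (c * qdl j) * xiX η τ qup j k *
              (1 + η j k * (∑ m, pdl m + ∑ i, qdl i)) := by ring
      have hInfNN := inf2_nonneg hG hK hAnn
      have hle := inf2_mono hG hK hkey
      exact Real.logb_le_logb_of_le one_lt_two (by linarith) (by linarith)
    · -- unicast side
      obtain ⟨F, Pd, hF, hPd, hmax, hVu⟩ :=
        Vun_char (N := N) (η := η) hU hG hK hβ hα hEmu hEun hT hP0
          ⟨by linarith, by linarith⟩ (u := P - c * ∑ j, qdl j)
      have hred := red_un hU hG hβ hα hP0 (by linarith) (by linarith) hF hPd hmax hfeas'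
        (by rw [hPs]; exact le_of_eq (Finset.mul_sum _ _ _).symm)
        (by rw [sub_sub_cancel]; exact (Finset.mul_sum _ _ _).symm)
      rw [hVu]
      refine le_trans ?_ hred
      unfold OunX
      apply mul_le_mul_of_nonneg_left _ hfrac0
      have hthNN : ∀ m, 0 ≤ thetaX β τ pup m := by
        intro m
        have h1 : 0 ≤ (τ:ℝ) * pup m := mul_nonneg (Nat.cast_nonneg τ) (hpup m).1
        exact div_nonneg (mul_nonneg h1 (sq_nonneg _))
          (by nlinarith [mul_nonneg h1 (hβ m).le])
      have hd1 : ∀ m, (0:ℝ) < 1 + β m * (∑ i, pdl i + ∑ j, qdl j) := by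
        intro m
        nlinarith [mul_nonneg (hβ m).le (add_nonneg hr0 ht0)]
      have hd2 : ∀ m, (0:ℝ) < 1 + β m * (∑ i, c * pdl i + ∑ j, c * qdl j) := by
        intro m
        rw [hsum']
        nlinarith [mul_nonneg (hβ m).le hP0]
      apply Finset.sum_le_sum
      intro m _
      apply mul_le_mul_of_nonneg_left _ (hα m)
      have hANN : 0 ≤ (N:ℝ) * pdl m * thetaX β τ pup m /
          (1 + β m * (∑ i, pdl i + ∑ j, qdl j)) :=
        div_nonneg (mul_nonneg (mul_nonneg (Nat.cast_nonneg N) (hpdl m)) (hthNN m))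
          (hd1 m).le
      apply Real.logb_le_logb_of_le one_lt_two (by linarith)
      have hkey : (N:ℝ) * pdl m * thetaX β τ pup m /
          (1 + β m * (∑ i, pdl i + ∑ j, qdl j)) ≤
          (N:ℝ) * (c * pdl m) * thetaX β τ pup m /
            (1 + β m * (∑ i, c * pdl i + ∑ j, c * qdl j)) := by
        rw [div_le_div_iff₀ (hd1 m) (hd2 m), hsum']
        have h2 : β m * (c * (∑ i, pdl i + ∑ j, qdl j)) = β m * P := by rw [hcrt]
        have hkey2 : 1 + β m * P ≤ c * (1 + β m * (∑ i, pdl i + ∑ j, qdl j)) := by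
          nlinarith [h2, hc1]
        calc (N:ℝ) * pdl m * thetaX β τ pup m * (1 + β m * P)
            ≤ (N:ℝ) * pdl m * thetaX β τ pup m *
              (c * (1 + β m * (∑ i, pdl i + ∑ j, qdl j))) :=
              mul_le_mul_of_nonneg_left hkey2
                (mul_nonneg (mul_nonneg (Nat.cast_nonneg N) (hpdl m)) (hthNN m))
          _ = (N:ℝ) * (c * pdl m) * thetaX β τ pup m *
              (1 + β m * (∑ i, pdl i + ∑ j, qdl j)) := by ring
      linarith

end dominate

/- ========= the curve point is attainable ========= -/

section curve
variable {η Emu : ∀ j : Fin G, Fin (K j) → ℝ} {β Eun α : Fin U → ℝ} {N T : ℕ} {P : ℝ}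

lemma curve_mem (hU : 0 < U) (hG : 0 < G) (hK : ∀ j, 0 < K j)
    (hη : ∀ j k, 0 < η j k) (hβ : ∀ m, 0 < β m) (hα : ∀ m, 0 ≤ α m)
    (hEmu : ∀ j k, 0 ≤ Emu j k) (hEun : ∀ m, 0 ≤ Eun m) (hT : U + G ≤ T)
    (hP : 0 ≤ P) {s : ℝ} (hs : s ∈ Set.Icc (0:ℝ) P) :
    (VmuX N T P η Emu β Eun α s, VunX N T P η Emu β Eun α (P - s)) ∈
      attainS N T P η Emu β Eun α := by
  have hUG : 0 < U + G := Nat.lt_of_lt_of_le hG (Nat.le_add_left G U)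
  obtain ⟨E, Q, hE, hQ, -, hVmu⟩ :=
    Vmu_char (N := N) (β := β) (α := α) hU hG hK hη hEmu hEun hT hP hs
  obtain ⟨F, Pd, hF, hPd, -, hVun⟩ :=
    Vun_char (N := N) (η := η) hU hG hK hβ hα hEmu hEun hT hP
      (⟨by linarith [hs.2], by linarith [hs.1]⟩ : P - s ∈ Set.Icc (0:ℝ) P)
  have hsum : ∑ m, Pd m + ∑ j, Q j = P := by rw [hPd.2, hQ.2]; ring
  refine ⟨U + G, fun j k => E j k / ((U + G : ℕ) : ℝ), Q,
    fun m => F m / ((U + G : ℕ) : ℝ), Pd,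
    feas_witness hG hT hE hQ.1 hF hPd.1 (le_of_eq hsum), ?_⟩
  simp only [Prod.mk.injEq]
  exact ⟨by rw [hVmu, OmuX_witness hUG hsum], by rw [hVun, OunX_witness hUG hsum]⟩

end curve

/-- Theorem 3 of the paper, Pareto boundary: if `U+G < T`, the set of
strong Pareto optimal points of the attainable set `S` is exactly
`{(V_mu(s), V_un(P-s)) : s ∈ [0,P]}`. -/
theorem moop_strong_pareto_boundary
    (U G : ℕ) (hU : 1 ≤ U) (hG : 1 ≤ G) (K : Fin G → ℕ) (hK : ∀ j, 1 ≤ K j)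
    (N : ℕ) (hN : 1 ≤ N) (T : ℕ) (hT : U + G < T)
    (P : ℝ) (hP : 0 < P)
    (η Emu : ∀ j : Fin G, Fin (K j) → ℝ) (β Eun α : Fin U → ℝ)
    (hη : ∀ j k, 0 < η j k) (hEmu : ∀ j k, 0 < Emu j k)
    (hβ : ∀ m, 0 < β m) (hEun : ∀ m, 0 < Eun m) (hα : ∀ m, 0 < α m) :
    {p : ℝ × ℝ | p ∈ attainS N T P η Emu β Eun α ∧
        ¬ ∃ q ∈ attainS N T P η Emu β Eun α,
          (p.1 ≤ q.1 ∧ p.2 < q.2) ∨ (p.1 < q.1 ∧ p.2 ≤ q.2)}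
      = {p : ℝ × ℝ | ∃ s ∈ Set.Icc (0 : ℝ) P,
          p = (VmuX N T P η Emu β Eun α s, VunX N T P η Emu β Eun α (P - s))} := by
  have hU' : 0 < U := hU
  have hG' : 0 < G := hG
  have hK' : ∀ j, 0 < K j := hK
  have hN' : 0 < N := hN
  have hTle : U + G ≤ T := hT.le
  have hP0 : 0 ≤ P := hP.le
  have hEmu' : ∀ j k, 0 ≤ Emu j k := fun j k => (hEmu j k).le
  have hEun' : ∀ m, 0 ≤ Eun m := fun m => (hEun m).le
  have hα' : ∀ m, 0 ≤ α m := fun m => (hα m).le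
  ext p
  constructor
  · rintro ⟨hmem, hpar⟩
    obtain ⟨τ, qup, qdl, pup, pdl, hfeas, hpeq⟩ := hmem
    obtain ⟨s, hsIcc, hle1, hle2⟩ :=
      scale_dominates (N := N) hU' hG' hK' hη hβ hα' hEmu' hEun' hTle hfeas
    have h1 : p.1 ≤ VmuX N T P η Emu β Eun α s := by rw [hpeq]; exact hle1
    have h2 : p.2 ≤ VunX N T P η Emu β Eun α (P - s) := by rw [hpeq]; exact hle2
    have hcur := curve_mem (N := N) hU' hG' hK' hη hβ hα' hEmu' hEun' hTle hP0 hsIcc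
    have he1 : p.1 = VmuX N T P η Emu β Eun α s := by
      by_contra hne
      exact hpar ⟨_, hcur, Or.inr ⟨lt_of_le_of_ne h1 hne, h2⟩⟩
    have he2 : p.2 = VunX N T P η Emu β Eun α (P - s) := by
      by_contra hne
      exact hpar ⟨_, hcur, Or.inl ⟨h1, lt_of_le_of_ne h2 hne⟩⟩
    exact ⟨s, hsIcc, by rw [Prod.ext_iff]; exact ⟨he1, he2⟩⟩
  · rintro ⟨s, hsIcc, rfl⟩
    refine ⟨curve_mem (N := N) hU' hG' hK' hη hβ hα' hEmu' hEun' hTle hP0 hsIcc, ?_⟩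
    rintro ⟨q, hq, hdom⟩
    obtain ⟨τ, qup, qdl, pup, pdl, hfeas, hqeq⟩ := hq
    obtain ⟨s', hs'Icc, hle1, hle2⟩ :=
      scale_dominates (N := N) hU' hG' hK' hη hβ hα' hEmu' hEun' hTle hfeas
    have hq1 : q.1 ≤ VmuX N T P η Emu β Eun α s' := by rw [hqeq]; exact hle1
    have hq2 : q.2 ≤ VunX N T P η Emu β Eun α (P - s') := by rw [hqeq]; exact hle2
    rcases hdom with ⟨ha, hb⟩ | ⟨ha, hb⟩
    · have hb' : VunX N T P η Emu β Eun α (P - s) < VunX N T P η Emu β Eun α (P - s') :=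
        lt_of_lt_of_le hb hq2
      have hss' : s' < s := by
        by_contra hcon
        push_neg at hcon
        have := Vun_le (N := N) (η := η) hU' hG' hK' hβ hα hEmu' hEun hN' hT hP0
          (by linarith [hs'Icc.2] : (0:ℝ) ≤ P - s') (by linarith : P - s' ≤ P - s)
          (by linarith [hsIcc.1] : P - s ≤ P)
        linarith
      have hlt := Vmu_lt (N := N) (β := β) (α := α) hU' hG' hK' hη hEmu hEun' hN' hT hP0
        hs'Icc.1 hss' hsIcc.2
      have hle := le_trans ha hq1
      linarith
    · have ha' : VmuX N T P η Emu β Eun α s < VmuX N T P η Emu β Eun α s' :=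
        lt_of_lt_of_le ha hq1
      have hss' : s < s' := by
        by_contra hcon
        push_neg at hcon
        have := Vmu_le (N := N) (β := β) (α := α) hU' hG' hK' hη hEmu hEun' hN' hT hP0
          hs'Icc.1 hcon hsIcc.2
        linarith
      have hlt := Vun_lt (N := N) (η := η) hU' hG' hK' hβ hα hEmu' hEun hN' hT hP0
        (by linarith [hs'Icc.2] : (0:ℝ) ≤ P - s') (by linarith : P - s' < P - s)
        (by linarith [hsIcc.1] : P - s ≤ P)
      have hle := le_trans hb hq2
      linarith
end
end

section
/- The attainable objective set S = {(O_mu(x), O_un(x)) : x ∈ X} of the joint unicast and multigroup multicast multiobjective problem is a convex subset of ℝ². -/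
open Finset

noncomputable section

section AuxMOOP
open Finset Set

private lemma continuousOn_finset_inf'_aux {ι X : Type*} [TopologicalSpace X]
    {s : Set X} {t : Finset ι} (ht : t.Nonempty) {f : ι → X → ℝ}
    (h : ∀ i, ContinuousOn (f i) s) :
    ContinuousOn (fun x => t.inf' ht (fun i => f i x)) s := by
  induction ht using Finset.Nonempty.cons_induction with
  | singleton a => simpa using h a
  | cons a t hat htne ih =>
      have heq : (fun x => (Finset.cons a t hat).inf' (Finset.cons_nonempty hat) (fun i => f i x))
          = fun x => (f a x) ⊓ (t.inf' htne (fun i => f i x)) := by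
        funext x
        exact Finset.inf'_cons htne (fun i => f i x)
      rw [heq]
      exact (h a).inf ih

private lemma continuousOn_ciInf_aux {ι X : Type*} [Fintype ι] [Nonempty ι] [TopologicalSpace X]
    {s : Set X} {f : ι → X → ℝ} (h : ∀ i, ContinuousOn (f i) s) :
    ContinuousOn (fun x => ⨅ i, f i x) s := by
  have heq : (fun x => ⨅ i, f i x)
      = fun x => Finset.univ.inf' Finset.univ_nonempty (fun i => f i x) := by
    funext x; rw [Finset.inf'_univ_eq_ciInf]
  rw [heq]
  exact continuousOn_finset_inf'_aux _ h

private lemma logb2_affine_concave {c x y a b : ℝ} (hc : 0 ≤ c) (hx : 0 ≤ x) (hy : 0 ≤ y)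
    (ha : 0 ≤ a) (hb : 0 ≤ b) (hab : a + b = 1) :
    a * Real.logb 2 (1 + c * x) + b * Real.logb 2 (1 + c * y)
      ≤ Real.logb 2 (1 + c * (a * x + b * y)) := by
  have h1 : (0:ℝ) < 1 + c * x := by positivity
  have h2 : (0:ℝ) < 1 + c * y := by positivity
  have hcc := strictConcaveOn_log_Ioi.concaveOn.2 (Set.mem_Ioi.2 h1) (Set.mem_Ioi.2 h2) ha hb hab
  have heq : a • (1 + c * x) + b • (1 + c * y) = 1 + c * (a * x + b * y) := by
    simp only [smul_eq_mul]; nlinarith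
  rw [heq] at hcc
  simp only [smul_eq_mul] at hcc
  have hlog2 : (0:ℝ) < Real.log 2 := Real.log_pos one_lt_two
  simp only [Real.logb]
  rw [show a * (Real.log (1 + c * x) / Real.log 2) + b * (Real.log (1 + c * y) / Real.log 2)
      = (a * Real.log (1 + c * x) + b * Real.log (1 + c * y)) / Real.log 2 by ring]
  gcongr

variable {U G : ℕ} {K : Fin G → ℕ}

/-- multicast per-user SINR with explicit pilot energies `e` and interference power `S`. -/
private def sinrMu (N : ℕ) (η : ∀ j : Fin G, Fin (K j) → ℝ) (q : Fin G → ℝ)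
    (e : ∀ j : Fin G, Fin (K j) → ℝ) (S : ℝ) (j : Fin G) (k : Fin (K j)) : ℝ :=
  (N : ℝ) * q j * (e j k * η j k ^ 2 / (1 + ∑ t, e j t * η j t)) / (1 + η j k * S)

private def sinrUn (N U' : ℕ) (β : Fin U' → ℝ) (p f : Fin U' → ℝ) (S : ℝ) (m : Fin U') : ℝ :=
  (N : ℝ) * p m * (f m * β m ^ 2 / (1 + f m * β m)) / (1 + β m * S)

private lemma OmuX_eq (N T : ℕ) (η : ∀ j : Fin G, Fin (K j) → ℝ) (τ : ℕ)
    (qup : ∀ j : Fin G, Fin (K j) → ℝ) (qdl : Fin G → ℝ) (pdl : Fin U → ℝ) :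
    OmuX N T η τ qup qdl pdl = (1 - (τ : ℝ) / (T : ℝ)) * Real.logb 2
      (1 + ⨅ j : Fin G, ⨅ k : Fin (K j),
      sinrMu N η qdl (fun j k => (τ : ℝ) * qup j k) (∑ m, pdl m + ∑ i, qdl i) j k) := rfl

private lemma OunX_eq (N T : ℕ) (β α : Fin U → ℝ) (τ : ℕ) (pup pdl : Fin U → ℝ)
    (qdl : Fin G → ℝ) :
    OunX N T β α τ pup pdl qdl = (1 - (τ : ℝ) / (T : ℝ)) * ∑ m, α m * Real.logb 2 (1 +
      sinrUn N U β pdl (fun m => (τ : ℝ) * pup m) (∑ u, pdl u + ∑ j, qdl j) m) := rfl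

end AuxMOOP

section AuxMOOP2
open Finset Set

variable {U G : ℕ} {K : Fin G → ℕ}

private def PhiM (N : ℕ) (η : ∀ j : Fin G, Fin (K j) → ℝ) (P : ℝ)
    (z : (Fin G → ℝ) × (∀ j : Fin G, Fin (K j) → ℝ)) : ℝ :=
  ⨅ j : Fin G, ⨅ k : Fin (K j), sinrMu N η z.1 z.2 P j k

private def KcM (Emu : ∀ j : Fin G, Fin (K j) → ℝ) :
    Set ((Fin G → ℝ) × (∀ j : Fin G, Fin (K j) → ℝ)) :=
  (Set.Icc (0 : Fin G → ℝ) 1 ∩ {q | ∑ j, q j ≤ 1}) ×ˢ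
    Set.Icc (0 : ∀ j : Fin G, Fin (K j) → ℝ) Emu

private lemma mem_KcM {Emu : ∀ j : Fin G, Fin (K j) → ℝ}
    {z : (Fin G → ℝ) × (∀ j : Fin G, Fin (K j) → ℝ)} :
    z ∈ KcM Emu ↔ ((∀ j, 0 ≤ z.1 j ∧ z.1 j ≤ 1) ∧ ∑ j, z.1 j ≤ 1) ∧
      (∀ j k, 0 ≤ z.2 j k ∧ z.2 j k ≤ Emu j k) := by
  simp only [KcM, Set.mem_prod, Set.mem_inter_iff, Set.mem_Icc, Set.mem_setOf_eq, Pi.le_def,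
    Pi.zero_apply, Pi.one_apply, forall_and]

private lemma sinrMu_denom_pos {η : ∀ j : Fin G, Fin (K j) → ℝ}
    (hη : ∀ j k, 0 < η j k) {e : ∀ j : Fin G, Fin (K j) → ℝ}
    (he : ∀ j k, 0 ≤ e j k) (j : Fin G) :
    (0:ℝ) < 1 + ∑ t, e j t * η j t := by
  have : (0:ℝ) ≤ ∑ t, e j t * η j t :=
    Finset.sum_nonneg fun t _ => mul_nonneg (he j t) (hη j t).le
  linarith

private lemma sinrMu_nonneg {N : ℕ} {η : ∀ j : Fin G, Fin (K j) → ℝ}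
    (hη : ∀ j k, 0 < η j k) {q : Fin G → ℝ} (hq : ∀ j, 0 ≤ q j)
    {e : ∀ j : Fin G, Fin (K j) → ℝ} (he : ∀ j k, 0 ≤ e j k) {S : ℝ} (hS : 0 ≤ S)
    (j : Fin G) (k : Fin (K j)) : 0 ≤ sinrMu N η q e S j k := by
  have h1 := sinrMu_denom_pos hη he j
  have h2 : (0:ℝ) < 1 + η j k * S := by
    have := mul_nonneg (hη j k).le hS; linarith
  unfold sinrMu
  have hnum : (0:ℝ) ≤ (N : ℝ) * q j * (e j k * η j k ^ 2 / (1 + ∑ t, e j t * η j t)) := by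
    apply mul_nonneg (mul_nonneg (Nat.cast_nonneg N) (hq j))
    exact div_nonneg (mul_nonneg (he j k) (by positivity)) h1.le
  exact div_nonneg hnum h2.le

private lemma exists_PhiM_max (hG : 1 ≤ G) (hK : ∀ j, 1 ≤ K j) (N : ℕ)
    (η Emu : ∀ j : Fin G, Fin (K j) → ℝ) (hη : ∀ j k, 0 < η j k)
    (hEmu : ∀ j k, 0 ≤ Emu j k) (P : ℝ) (hP : 0 ≤ P) :
    ∃ z, z ∈ KcM Emu ∧ IsMaxOn (PhiM N η P) (KcM Emu) z := by
  haveI : Nonempty (Fin G) := Fin.pos_iff_nonempty.mp hG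
  have hne : ∀ j : Fin G, Nonempty (Fin (K j)) := fun j => Fin.pos_iff_nonempty.mp (hK j)
  have hcomp : IsCompact (KcM Emu) := by
    apply IsCompact.prod
    · exact isCompact_Icc.inter_right
        (isClosed_le (continuous_finset_sum _ fun i _ => continuous_apply i) continuous_const)
    · exact isCompact_Icc
  have hKne : (KcM Emu).Nonempty := by
    refine ⟨(0, 0), mem_KcM.mpr ⟨⟨fun j => ⟨le_refl _, zero_le_one⟩, by simp⟩,
      fun j k => ⟨le_refl _, hEmu j k⟩⟩⟩
  have hcont : ContinuousOn (PhiM N η P) (KcM Emu) := by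
    apply continuousOn_ciInf_aux
    intro j
    haveI := hne j
    apply continuousOn_ciInf_aux
    intro k
    have h2 : (0:ℝ) < 1 + η j k * P := by
      have := mul_nonneg (hη j k).le hP; linarith
    apply ContinuousOn.div_const
    apply ContinuousOn.mul
    · exact (continuous_const.mul ((continuous_apply j).comp continuous_fst)).continuousOn
    · apply ContinuousOn.div
      · exact (((continuous_apply (A := fun _ : Fin (K j) => ℝ) k).comp ((continuous_apply j).comp continuous_snd)).mul
          continuous_const).continuousOn
      · exact (continuous_const.add (continuous_finset_sum _ fun t _ =>
          ((continuous_apply t).comp ((continuous_apply j).comp continuous_snd)).mul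
            continuous_const)).continuousOn
      · intro z hz
        obtain ⟨-, hz2⟩ := mem_KcM.mp hz
        exact (sinrMu_denom_pos hη (fun j k => (hz2 j k).1) j).ne'
  exact hcomp.exists_isMaxOn hKne hcont

end AuxMOOP2

section AuxMOOP3
open Finset Set

variable {U : ℕ}

private def AQu (U : ℕ) (Q : ℝ) : Set (Fin U → ℝ) :=
  Set.Icc 0 (fun _ => Q) ∩ {p | ∑ m, p m ≤ Q}

private lemma mem_AQu {Q : ℝ} {p : Fin U → ℝ} :
    p ∈ AQu U Q ↔ (∀ m, 0 ≤ p m ∧ p m ≤ Q) ∧ ∑ m, p m ≤ Q := by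
  simp only [AQu, Set.mem_inter_iff, Set.mem_Icc, Set.mem_setOf_eq, Pi.le_def, Pi.zero_apply,
    forall_and]

private def gF (α c : Fin U → ℝ) (p : Fin U → ℝ) : ℝ :=
  ∑ m, α m * Real.logb 2 (1 + c m * p m)

private def F2 (U : ℕ) (α c : Fin U → ℝ) (Q : ℝ) : ℝ :=
  sSup (gF α c '' AQu U Q)

private lemma gF_nonneg {α c : Fin U → ℝ} (hα : ∀ m, 0 ≤ α m) (hc : ∀ m, 0 ≤ c m)
    {p : Fin U → ℝ} (hp : ∀ m, 0 ≤ p m) : 0 ≤ gF α c p := by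
  refine Finset.sum_nonneg fun m _ => mul_nonneg (hα m) ?_
  refine Real.logb_nonneg one_lt_two ?_
  nlinarith [mul_nonneg (hc m) (hp m)]

private lemma AQu_compact (Q : ℝ) : IsCompact (AQu U Q) :=
  isCompact_Icc.inter_right
    (isClosed_le (continuous_finset_sum _ fun i _ => continuous_apply i) continuous_const)

private lemma gF_contOn {α c : Fin U → ℝ} (hc : ∀ m, 0 ≤ c m) {Q : ℝ} :
    ContinuousOn (gF α c) (AQu U Q) := by
  apply continuousOn_finset_sum
  intro m _
  apply ContinuousOn.mul continuousOn_const
  have harg : ContinuousOn (fun p : Fin U → ℝ => 1 + c m * p m) (AQu U Q) :=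
    (continuous_const.add (continuous_const.mul (continuous_apply m))).continuousOn
  have hne : ∀ p ∈ AQu U Q, (1:ℝ) + c m * p m ≠ 0 := by
    intro p hp
    have h0 := (mem_AQu.mp hp).1 m
    nlinarith [mul_nonneg (hc m) h0.1]
  simpa [Real.logb, div_eq_mul_inv, Pi.mul_def] using (harg.log hne).mul continuousOn_const

private lemma exists_F2_max (hU : 1 ≤ U) (α c : Fin U → ℝ) (hα : ∀ m, 0 ≤ α m)
    (hc : ∀ m, 0 ≤ c m) (Q : ℝ) (hQ : 0 ≤ Q) :
    ∃ p, p ∈ AQu U Q ∧ gF α c p = F2 U α c Q ∧ ∀ p' ∈ AQu U Q, gF α c p' ≤ gF α c p := by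
  have h0 : (0 : Fin U → ℝ) ∈ AQu U Q :=
    mem_AQu.mpr ⟨fun m => ⟨le_refl _, hQ⟩, by simp [hQ]⟩
  obtain ⟨p, hp, hmax⟩ := (AQu_compact Q).exists_isMaxOn ⟨0, h0⟩ (gF_contOn hc)
  have hub : ∀ p' ∈ AQu U Q, gF α c p' ≤ gF α c p := fun p' hp' => hmax hp'
  refine ⟨p, hp, ?_, hub⟩
  refine (IsGreatest.csSup_eq ⟨Set.mem_image_of_mem _ hp, ?_⟩).symm
  rintro y ⟨p', hp', rfl⟩
  exact hub p' hp'

private lemma F2_nonneg (hU : 1 ≤ U) {α c : Fin U → ℝ} (hα : ∀ m, 0 ≤ α m)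
    (hc : ∀ m, 0 ≤ c m) {Q : ℝ} (hQ : 0 ≤ Q) : 0 ≤ F2 U α c Q := by
  obtain ⟨p, hp, heq, -⟩ := exists_F2_max hU α c hα hc Q hQ
  rw [← heq]
  exact gF_nonneg hα hc fun m => ((mem_AQu.mp hp).1 m).1

private lemma le_F2 (hU : 1 ≤ U) {α c : Fin U → ℝ} (hα : ∀ m, 0 ≤ α m)
    (hc : ∀ m, 0 ≤ c m) {Q : ℝ} (hQ : 0 ≤ Q) {p : Fin U → ℝ} (hp : p ∈ AQu U Q) :
    gF α c p ≤ F2 U α c Q := by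
  obtain ⟨p', hp', heq, hub⟩ := exists_F2_max hU α c hα hc Q hQ
  rw [← heq]; exact hub p hp

private lemma F2_concave (hU : 1 ≤ U) {α c : Fin U → ℝ} (hα : ∀ m, 0 ≤ α m)
    (hc : ∀ m, 0 ≤ c m) {Q Q' a b : ℝ} (hQ : 0 ≤ Q) (hQ' : 0 ≤ Q')
    (ha : 0 ≤ a) (hb : 0 ≤ b) (hab : a + b = 1) :
    a * F2 U α c Q + b * F2 U α c Q' ≤ F2 U α c (a * Q + b * Q') := by
  obtain ⟨p, hp, heq, -⟩ := exists_F2_max hU α c hα hc Q hQ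
  obtain ⟨p', hp', heq', -⟩ := exists_F2_max hU α c hα hc Q' hQ'
  obtain ⟨hp1, hp2⟩ := mem_AQu.mp hp
  obtain ⟨hp1', hp2'⟩ := mem_AQu.mp hp'
  have hmem : (fun m => a * p m + b * p' m) ∈ AQu U (a * Q + b * Q') := by
    refine mem_AQu.mpr ⟨fun m => ⟨?_, ?_⟩, ?_⟩
    · exact add_nonneg (mul_nonneg ha (hp1 m).1) (mul_nonneg hb (hp1' m).1)
    · have h1 := (hp1 m).2
      have h2 := (hp1' m).2
      gcongr
    · rw [Finset.sum_add_distrib, ← Finset.mul_sum, ← Finset.mul_sum]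
      gcongr
  calc a * F2 U α c Q + b * F2 U α c Q' = a * gF α c p + b * gF α c p' := by rw [heq, heq']
    _ ≤ gF α c (fun m => a * p m + b * p' m) := by
        rw [gF, gF, gF, Finset.mul_sum, Finset.mul_sum, ← Finset.sum_add_distrib]
        apply Finset.sum_le_sum
        intro m _
        have hcc := logb2_affine_concave (hc m) (hp1 m).1 (hp1' m).1 ha hb hab
        calc a * (α m * Real.logb 2 (1 + c m * p m)) + b * (α m * Real.logb 2 (1 + c m * p' m))
            = α m * (a * Real.logb 2 (1 + c m * p m) + b * Real.logb 2 (1 + c m * p' m)) := by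
              ring
          _ ≤ α m * Real.logb 2 (1 + c m * (a * p m + b * p' m)) :=
              mul_le_mul_of_nonneg_left hcc (hα m)
    _ ≤ F2 U α c (a * Q + b * Q') := le_F2 hU hα hc (by positivity) hmem

end AuxMOOP3

set_option maxHeartbeats 2000000 in
/-- Theorem 4 of the paper: the attainable objective set `S` of the
joint unicast and multigroup multicast multiobjective problem is convex. -/
theorem moop_attainable_set_convex
    (U G : ℕ) (hU : 1 ≤ U) (hG : 1 ≤ G) (K : Fin G → ℕ) (hK : ∀ j, 1 ≤ K j)
    (N : ℕ) (hN : 1 ≤ N) (T : ℕ) (hT : U + G ≤ T)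
    (P : ℝ) (hP : 0 < P)
    (η Emu : ∀ j : Fin G, Fin (K j) → ℝ) (β Eun α : Fin U → ℝ)
    (hη : ∀ j k, 0 < η j k) (hEmu : ∀ j k, 0 < Emu j k)
    (hβ : ∀ m, 0 < β m) (hEun : ∀ m, 0 < Eun m) (hα : ∀ m, 0 < α m) :
    Convex ℝ (attainS N T P η Emu β Eun α) := by
  classical
  haveI hGne : Nonempty (Fin G) := Fin.pos_iff_nonempty.mp hG
  haveI hUne : Nonempty (Fin U) := Fin.pos_iff_nonempty.mp hU
  haveI hne : ∀ j : Fin G, Nonempty (Fin (K j)) := fun j => Fin.pos_iff_nonempty.mp (hK j)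
  have hT0 : 0 < T := by omega
  have hTR : (0:ℝ) < (T:ℝ) := by exact_mod_cast hT0
  -- multicast max-min maximizer
  obtain ⟨z, hzK, hzmax⟩ :=
    exists_PhiM_max hG hK N η Emu hη (fun j k => (hEmu j k).le) P hP.le
  obtain ⟨⟨hz11, hz12⟩, hz2⟩ := mem_KcM.mp hzK
  set γ : ℝ := PhiM N η P z with hγdef
  have hγ0 : 0 ≤ γ := by
    have h0K : ((0 : Fin G → ℝ), (0 : ∀ j : Fin G, Fin (K j) → ℝ)) ∈ KcM Emu :=
      mem_KcM.mpr ⟨⟨fun j => ⟨le_refl _, zero_le_one⟩, by simp⟩,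
        fun j k => ⟨le_refl _, (hEmu j k).le⟩⟩
    have h := hzmax h0K
    have h00 : PhiM N η P ((0 : Fin G → ℝ), (0 : ∀ j : Fin G, Fin (K j) → ℝ)) = 0 := by
      simp [PhiM, sinrMu]
    have h' : PhiM N η P ((0 : Fin G → ℝ), (0 : ∀ j : Fin G, Fin (K j) → ℝ))
        ≤ PhiM N η P z := h
    rw [h00] at h'
    exact h'
  -- unicast constants
  set θh : Fin U → ℝ := fun m => Eun m * β m ^ 2 / (1 + Eun m * β m) with hθhdef
  have hθh0 : ∀ m, 0 ≤ θh m := by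
    intro m
    have h1 : (0:ℝ) < 1 + Eun m * β m := by nlinarith [mul_nonneg (hEun m).le (hβ m).le]
    exact div_nonneg (mul_nonneg (hEun m).le (sq_nonneg _)) h1.le
  set cU : Fin U → ℝ := fun m => (N:ℝ) * θh m / (1 + β m * P) with hcUdef
  have hβP : ∀ m, (0:ℝ) < 1 + β m * P := by
    intro m; nlinarith [mul_nonneg (hβ m).le hP.le]
  have hcU0 : ∀ m, 0 ≤ cU m := fun m =>
    div_nonneg (mul_nonneg (Nat.cast_nonneg N) (hθh0 m)) (hβP m).le
  have hα0 : ∀ m, 0 ≤ α m := fun m => (hα m).le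
  set c0 : ℝ := 1 - (U + G : ℝ) / (T : ℝ) with hc0def
  have hc00 : 0 ≤ c0 := by
    rw [hc0def, sub_nonneg]
    rw [div_le_one hTR]
    exact_mod_cast hT
  set B : Set (ℝ × ℝ) := {y | ∃ Δ : ℝ, 0 ≤ Δ ∧ Δ ≤ P ∧
    0 ≤ y.1 ∧ y.1 ≤ c0 * Real.logb 2 (1 + γ * Δ) ∧
    0 ≤ y.2 ∧ y.2 ≤ c0 * F2 U α cU (P - Δ)} with hBdef
  have hBconv : Convex ℝ B := by
    intro y hy y' hy' a b ha hb hab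
    obtain ⟨Δ, hΔ0, hΔP, h10, h11, h20, h21⟩ := hy
    obtain ⟨Δ', hΔ0', hΔP', h10', h11', h20', h21'⟩ := hy'
    refine ⟨a * Δ + b * Δ', by positivity, by nlinarith, ?_, ?_, ?_, ?_⟩
    · show 0 ≤ a * y.1 + b * y'.1
      positivity
    · show a * y.1 + b * y'.1 ≤ c0 * Real.logb 2 (1 + γ * (a * Δ + b * Δ'))
      have step1 : a * y.1 + b * y'.1
          ≤ c0 * (a * Real.logb 2 (1 + γ * Δ) + b * Real.logb 2 (1 + γ * Δ')) := by
        have e1 := mul_le_mul_of_nonneg_left h11 ha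
        have e2 := mul_le_mul_of_nonneg_left h11' hb
        nlinarith
      refine step1.trans (mul_le_mul_of_nonneg_left ?_ hc00)
      exact logb2_affine_concave hγ0 hΔ0 hΔ0' ha hb hab
    · show 0 ≤ a * y.2 + b * y'.2
      positivity
    · show a * y.2 + b * y'.2 ≤ c0 * F2 U α cU (P - (a * Δ + b * Δ'))
      have hPQ : P - (a * Δ + b * Δ') = a * (P - Δ) + b * (P - Δ') := by
        linear_combination (-P) * hab
      rw [hPQ]
      have step1 : a * y.2 + b * y'.2
          ≤ c0 * (a * F2 U α cU (P - Δ) + b * F2 U α cU (P - Δ')) := by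
        have e1 := mul_le_mul_of_nonneg_left h21 ha
        have e2 := mul_le_mul_of_nonneg_left h21' hb
        nlinarith
      refine step1.trans (mul_le_mul_of_nonneg_left ?_ hc00)
      exact F2_concave hU hα0 hcU0 (by linarith) (by linarith) ha hb hab
  have hSB : attainS N T P η Emu β Eun α ⊆ B := by
    rintro y ⟨τ, qup, qdl, pdl', pdl, ⟨hτ1, hτ2, hqdl0, hpdl0, hqup, hpup, hsum⟩, rfl⟩
    rw [OmuX_eq, OunX_eq]
    set e : ∀ j : Fin G, Fin (K j) → ℝ := fun j k => (τ : ℝ) * qup j k with hedef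
    set f : Fin U → ℝ := fun m => (τ : ℝ) * pdl' m with hfdef
    set S' : ℝ := ∑ m, pdl m + ∑ i, qdl i with hS'def
    have he0 : ∀ j k, 0 ≤ e j k := fun j k =>
      mul_nonneg (Nat.cast_nonneg τ) (hqup j k).1
    have heE : ∀ j k, e j k ≤ Emu j k := fun j k => (hqup j k).2
    have hf0 : ∀ m, 0 ≤ f m := fun m => mul_nonneg (Nat.cast_nonneg τ) (hpup m).1
    have hfE : ∀ m, f m ≤ Eun m := fun m => (hpup m).2
    have hSq0 : (0:ℝ) ≤ ∑ i, qdl i := Finset.sum_nonneg fun i _ => hqdl0 i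
    have hSp0 : (0:ℝ) ≤ ∑ m, pdl m := Finset.sum_nonneg fun m _ => hpdl0 m
    have hS'0 : 0 ≤ S' := by rw [hS'def]; exact add_nonneg hSp0 hSq0
    have hcτ0 : 0 ≤ 1 - (τ:ℝ)/(T:ℝ) := by
      rw [sub_nonneg, div_le_one hTR]
      exact_mod_cast hτ2
    have hcτle : 1 - (τ:ℝ)/(T:ℝ) ≤ c0 := by
      rw [hc0def]
      have h1 : ((U:ℝ) + G) ≤ (τ:ℝ) := by exact_mod_cast hτ1
      have h2 : ((U:ℝ) + G) / T ≤ (τ:ℝ) / T := by gcongr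
      linarith
    set m0 : ℝ := ⨅ j : Fin G, ⨅ k : Fin (K j), sinrMu N η qdl e S' j k with hm0def
    have hm00 : 0 ≤ m0 := by
      rw [hm0def]
      exact le_ciInf fun j => le_ciInf fun k => sinrMu_nonneg hη hqdl0 he0 hS'0 j k
    have hL0 : 0 ≤ Real.logb 2 (1 + m0) := Real.logb_nonneg one_lt_two (by linarith)
    have hfβ : ∀ m, (0:ℝ) < 1 + f m * β m := by
      intro m; nlinarith [mul_nonneg (hf0 m) (hβ m).le]
    have hβS' : ∀ m, (0:ℝ) < 1 + β m * S' := by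
      intro m; nlinarith [mul_nonneg (hβ m).le hS'0]
    have hsU0 : ∀ m, 0 ≤ sinrUn N U β pdl f S' m := by
      intro m
      unfold sinrUn
      apply div_nonneg _ (hβS' m).le
      apply mul_nonneg (mul_nonneg (Nat.cast_nonneg N) (hpdl0 m))
      exact div_nonneg (mul_nonneg (hf0 m) (sq_nonneg _)) (hfβ m).le
    have hSum0 : 0 ≤ ∑ m, α m * Real.logb 2 (1 + sinrUn N U β pdl f S' m) :=
      Finset.sum_nonneg fun m _ => mul_nonneg (hα0 m)
        (Real.logb_nonneg one_lt_two (by linarith [hsU0 m]))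
    rcases eq_or_lt_of_le hS'0 with hS0 | hSpos
    · -- degenerate case: no downlink power at all
      have hqz : ∑ i, qdl i = 0 := by
        rw [hS'def] at hS0; linarith
      have hpz : ∑ m, pdl m = 0 := by
        rw [hS'def] at hS0; linarith
      have hq0 : ∀ i, qdl i = 0 := fun i =>
        (Finset.sum_eq_zero_iff_of_nonneg (fun i _ => hqdl0 i)).mp hqz i (Finset.mem_univ i)
      have hp0 : ∀ m, pdl m = 0 := fun m =>
        (Finset.sum_eq_zero_iff_of_nonneg (fun m _ => hpdl0 m)).mp hpz m (Finset.mem_univ m)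
      have hm0z : m0 = 0 := by
        refine le_antisymm ?_ hm00
        obtain ⟨j0⟩ := hGne
        obtain ⟨k0⟩ := hne j0
        have h1 : m0 ≤ ⨅ k : Fin (K j0), sinrMu N η qdl e S' j0 k := by
          rw [hm0def]
          exact ciInf_le (Finite.bddBelow_range _) j0
        have h2 : (⨅ k : Fin (K j0), sinrMu N η qdl e S' j0 k)
            ≤ sinrMu N η qdl e S' j0 k0 := ciInf_le (Finite.bddBelow_range _) k0
        have h3 : sinrMu N η qdl e S' j0 k0 = 0 := by
          simp [sinrMu, hq0 j0]
        linarith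
      refine ⟨0, le_refl _, hP.le, ?_, ?_, ?_, ?_⟩
      · show 0 ≤ (1 - (τ:ℝ)/(T:ℝ)) * Real.logb 2 (1 + m0)
        exact mul_nonneg hcτ0 hL0
      · show (1 - (τ:ℝ)/(T:ℝ)) * Real.logb 2 (1 + m0) ≤ c0 * Real.logb 2 (1 + γ * 0)
        simp [hm0z]
      · show 0 ≤ (1 - (τ:ℝ)/(T:ℝ)) * ∑ m, α m * Real.logb 2 (1 + sinrUn N U β pdl f S' m)
        exact mul_nonneg hcτ0 hSum0
      · show (1 - (τ:ℝ)/(T:ℝ)) * ∑ m, α m * Real.logb 2 (1 + sinrUn N U β pdl f S' m)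
          ≤ c0 * F2 U α cU (P - 0)
        have hz : ∑ m, α m * Real.logb 2 (1 + sinrUn N U β pdl f S' m) = 0 :=
          Finset.sum_eq_zero fun m _ => by simp [sinrUn, hp0 m]
        rw [hz, mul_zero]
        exact mul_nonneg hc00 (F2_nonneg hU hα0 hcU0 (by linarith))
    · -- main case
      set t : ℝ := P / S' with htdef
      have ht1 : 1 ≤ t := (one_le_div hSpos).mpr hsum
      have ht0 : (0:ℝ) ≤ t := le_trans zero_le_one ht1
      have htS : t * S' = P := by
        rw [htdef]; exact div_mul_cancel₀ P hSpos.ne'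
      have hΔP : t * ∑ i, qdl i ≤ P := by
        have h1 : t * ∑ i, qdl i ≤ t * S' := by
          rw [hS'def]; nlinarith
        linarith [htS]
      refine ⟨t * ∑ i, qdl i, mul_nonneg ht0 hSq0, hΔP, ?_, ?_, ?_, ?_⟩
      · show 0 ≤ (1 - (τ:ℝ)/(T:ℝ)) * Real.logb 2 (1 + m0)
        exact mul_nonneg hcτ0 hL0
      · show (1 - (τ:ℝ)/(T:ℝ)) * Real.logb 2 (1 + m0)
          ≤ c0 * Real.logb 2 (1 + γ * (t * ∑ i, qdl i))
        have hkey : m0 ≤ γ * (t * ∑ i, qdl i) := by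
          rcases eq_or_lt_of_le hSq0 with hq0s | hqpos
          · have hq0 : ∀ i, qdl i = 0 := fun i =>
              (Finset.sum_eq_zero_iff_of_nonneg (fun i _ => hqdl0 i)).mp hq0s.symm i
                (Finset.mem_univ i)
            have hm0z : m0 = 0 := by
              refine le_antisymm ?_ hm00
              obtain ⟨j0⟩ := hGne
              obtain ⟨k0⟩ := hne j0
              have h1 : m0 ≤ ⨅ k : Fin (K j0), sinrMu N η qdl e S' j0 k := by
                rw [hm0def]
                exact ciInf_le (Finite.bddBelow_range _) j0
              have h2 : (⨅ k : Fin (K j0), sinrMu N η qdl e S' j0 k)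
                  ≤ sinrMu N η qdl e S' j0 k0 := ciInf_le (Finite.bddBelow_range _) k0
              have h3 : sinrMu N η qdl e S' j0 k0 = 0 := by
                simp [sinrMu, hq0 j0]
              linarith
            rw [hm0z, ← hq0s, mul_zero, mul_zero]
          · have hΔpos : 0 < t * ∑ i, qdl i :=
              mul_pos (lt_of_lt_of_le one_pos ht1) hqpos
            set Δ : ℝ := t * ∑ i, qdl i with hΔdef
            set q' : Fin G → ℝ := fun j => t * qdl j / Δ with hq'def
            have hq'0 : ∀ j, 0 ≤ q' j := fun j =>
              div_nonneg (mul_nonneg ht0 (hqdl0 j)) hΔpos.le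
            have hq'1 : ∀ j, q' j ≤ 1 := by
              intro j
              rw [hq'def, div_le_one hΔpos, hΔdef]
              exact mul_le_mul_of_nonneg_left
                (Finset.single_le_sum (fun i _ => hqdl0 i) (Finset.mem_univ j)) ht0
            have hq'sum : ∑ j, q' j ≤ 1 := by
              rw [hq'def]
              have : ∑ j, t * qdl j / Δ = (t * ∑ i, qdl i) / Δ := by
                rw [← Finset.sum_div, ← Finset.mul_sum]
              rw [this, ← hΔdef, div_self hΔpos.ne']
            have hmemK : (q', e) ∈ KcM Emu :=
              mem_KcM.mpr ⟨⟨fun j => ⟨hq'0 j, hq'1 j⟩, hq'sum⟩,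
                fun j k => ⟨he0 j k, heE j k⟩⟩
            have hPhile : PhiM N η P (q', e) ≤ γ := hzmax hmemK
            have hjk : ∀ (j : Fin G) (k : Fin (K j)),
                m0 ≤ Δ * sinrMu N η q' e P j k := by
              intro j k
              have h1 : m0 ≤ sinrMu N η qdl e S' j k := by
                have ha1 : m0 ≤ ⨅ k : Fin (K j), sinrMu N η qdl e S' j k := by
                  rw [hm0def]
                  exact ciInf_le (Finite.bddBelow_range _) j
                exact ha1.trans (ciInf_le (Finite.bddBelow_range _) k)
              refine h1.trans ?_
              have hξ0 : 0 ≤ e j k * η j k ^ 2 / (1 + ∑ t', e j t' * η j t') :=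
                div_nonneg (mul_nonneg (he0 j k) (sq_nonneg _))
                  (sinrMu_denom_pos hη he0 j).le
              set ξ : ℝ := e j k * η j k ^ 2 / (1 + ∑ t', e j t' * η j t') with hξdef
              have hd1 : (0:ℝ) < 1 + η j k * S' := by
                nlinarith [mul_nonneg (hη j k).le hS'0]
              have hd2 : (0:ℝ) < 1 + η j k * P := by
                nlinarith [mul_nonneg (hη j k).le hP.le]
              have hrhs : Δ * sinrMu N η q' e P j k
                  = (N:ℝ) * (t * qdl j) * ξ / (1 + η j k * P) := by
                unfold sinrMu
                rw [← hξdef, hq'def]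
                field_simp
              have hlhs : sinrMu N η qdl e S' j k
                  = (N:ℝ) * qdl j * ξ / (1 + η j k * S') := by
                unfold sinrMu
                rw [← hξdef]
              rw [hlhs, hrhs, div_le_div_iff₀ hd1 hd2, ← htS]
              have hA0 : 0 ≤ (N:ℝ) * qdl j * ξ :=
                mul_nonneg (mul_nonneg (Nat.cast_nonneg N) (hqdl0 j)) hξ0
              nlinarith [mul_nonneg (sub_nonneg.mpr ht1) hA0,
                mul_nonneg (mul_nonneg (mul_nonneg (sub_nonneg.mpr ht1) hA0) (hη j k).le) hSpos.le]
            have hPhi' : m0 / Δ ≤ PhiM N η P (q', e) := by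
              refine le_ciInf fun j => le_ciInf fun k => ?_
              rw [div_le_iff₀ hΔpos]
              calc m0 ≤ Δ * sinrMu N η q' e P j k := hjk j k
                _ = sinrMu N η q' e P j k * Δ := mul_comm _ _
            have := (div_le_iff₀ hΔpos).mp (hPhi'.trans hPhile)
            calc m0 ≤ γ * Δ := this
              _ = γ * (t * ∑ i, qdl i) := by rw [hΔdef]
        have hLle : Real.logb 2 (1 + m0) ≤ Real.logb 2 (1 + γ * (t * ∑ i, qdl i)) :=
          Real.logb_le_logb_of_le one_lt_two (by linarith) (by linarith)
        exact mul_le_mul hcτle hLle hL0 hc00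
      · show 0 ≤ (1 - (τ:ℝ)/(T:ℝ)) * ∑ m, α m * Real.logb 2 (1 + sinrUn N U β pdl f S' m)
        exact mul_nonneg hcτ0 hSum0
      · show (1 - (τ:ℝ)/(T:ℝ)) * ∑ m, α m * Real.logb 2 (1 + sinrUn N U β pdl f S' m)
          ≤ c0 * F2 U α cU (P - t * ∑ i, qdl i)
        have hPp : P - t * ∑ i, qdl i = t * ∑ m, pdl m := by
          rw [hS'def] at htS
          linarith [htS]
        have hmemA : (fun m => t * pdl m) ∈ AQu U (t * ∑ m, pdl m) := by
          refine mem_AQu.mpr ⟨fun m => ⟨mul_nonneg ht0 (hpdl0 m), ?_⟩, ?_⟩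
          · exact mul_le_mul_of_nonneg_left
              (Finset.single_le_sum (fun i _ => hpdl0 i) (Finset.mem_univ m)) ht0
          · rw [← Finset.mul_sum]
        have hterm : ∀ m, sinrUn N U β pdl f S' m ≤ cU m * (t * pdl m) := by
          intro m
          have hθm0 : 0 ≤ f m * β m ^ 2 / (1 + f m * β m) :=
            div_nonneg (mul_nonneg (hf0 m) (sq_nonneg _)) (hfβ m).le
          set θm : ℝ := f m * β m ^ 2 / (1 + f m * β m) with hθmdef
          have hEβ : (0:ℝ) < 1 + Eun m * β m := by
            nlinarith [mul_nonneg (hEun m).le (hβ m).le]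
          have hθmle : θm ≤ θh m := by
            rw [hθmdef, hθhdef]
            rw [div_le_div_iff₀ (hfβ m) hEβ]
            nlinarith [mul_nonneg (sub_nonneg.mpr (hfE m)) (sq_nonneg (β m)),
              mul_nonneg (mul_nonneg (hf0 m) (hEun m).le) (pow_pos (hβ m) 3).le]
          have hθhm0 : 0 ≤ θh m := hθh0 m
          have hlhs : sinrUn N U β pdl f S' m
              = (N:ℝ) * pdl m * θm / (1 + β m * S') := by
            unfold sinrUn
            rw [← hθmdef]
          have hrhs : cU m * (t * pdl m)
              = (N:ℝ) * pdl m * θh m * t / (1 + β m * P) := by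
            rw [hcUdef]
            field_simp
          rw [hlhs, hrhs, div_le_div_iff₀ (hβS' m) (hβP m), ← htS]
          have hA0 : 0 ≤ (N:ℝ) * pdl m :=
            mul_nonneg (Nat.cast_nonneg N) (hpdl0 m)
          nlinarith [mul_nonneg hA0 (sub_nonneg.mpr hθmle),
            mul_nonneg (mul_nonneg hA0 hθhm0) (sub_nonneg.mpr ht1),
            mul_nonneg (mul_nonneg (mul_nonneg (mul_nonneg hA0 (hβ m).le) ht0) hSpos.le)
              (sub_nonneg.mpr hθmle)]
        have hgFeq : gF α cU (fun m => t * pdl m)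
            = ∑ m, α m * Real.logb 2 (1 + cU m * (t * pdl m)) := rfl
        have hsumle : ∑ m, α m * Real.logb 2 (1 + sinrUn N U β pdl f S' m)
            ≤ ∑ m, α m * Real.logb 2 (1 + cU m * (t * pdl m)) := by
          refine Finset.sum_le_sum fun m _ => ?_
          refine mul_le_mul_of_nonneg_left ?_ (hα0 m)
          exact Real.logb_le_logb_of_le one_lt_two (by linarith [hsU0 m])
            (by linarith [hterm m])
        have hgF2 : gF α cU (fun m => t * pdl m) ≤ F2 U α cU (t * ∑ m, pdl m) :=
          le_F2 hU hα0 hcU0 (mul_nonneg ht0 hSp0) hmemA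
        rw [hPp]
        rw [hgFeq] at hgF2
        exact mul_le_mul hcτle (hsumle.trans hgF2) hSum0 hc00
  have hBS : B ⊆ attainS N T P η Emu β Eun α := by
    rintro y ⟨Δ, hΔ0, hΔP, hy10, hy11, hy20, hy21⟩
    rcases eq_or_lt_of_le hc00 with hc0z | hc0pos
    · -- degenerate case `c0 = 0` : the only attainable point is the origin
      have hy1z : y.1 = 0 := by
        refine le_antisymm ?_ hy10
        rw [← hc0z] at hy11
        simpa using hy11
      have hy2z : y.2 = 0 := by
        refine le_antisymm ?_ hy20
        rw [← hc0z] at hy21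
        simpa using hy21
      refine ⟨T, 0, 0, 0, 0, ?_, ?_⟩
      · exact ⟨hT, le_refl T, fun j => le_refl _, fun m => le_refl _,
          fun j k => ⟨le_refl _, by simpa using (hEmu j k).le⟩,
          fun m => ⟨le_refl _, by simpa using (hEun m).le⟩, by simpa using hP.le⟩
      · have hOmu : OmuX (U := U) N T η T 0 0 0 = 0 := by
          rw [OmuX_eq, div_self hTR.ne']
          ring
        have hOun : OunX (G := G) N T β α T 0 0 0 = 0 := by
          rw [OunX_eq, div_self hTR.ne']
          ring
        rw [hOmu, hOun]
        exact Prod.ext hy1z hy2z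
    · -- main case `0 < c0`
      have hQ0 : (0:ℝ) ≤ P - Δ := by linarith
      obtain ⟨p, hpA, hpeq, -⟩ := exists_F2_max hU α cU hα0 hcU0 (P - Δ) hQ0
      obtain ⟨hp1, hp2⟩ := mem_AQu.mp hpA
      set qdl : Fin G → ℝ := fun j => Δ * z.1 j with hqdldef
      have hqdl0 : ∀ j, 0 ≤ qdl j := fun j => mul_nonneg hΔ0 (hz11 j).1
      set Sact : ℝ := ∑ m, p m + ∑ i, qdl i with hSactdef
      have hSact0 : 0 ≤ Sact := by
        rw [hSactdef]
        exact add_nonneg (Finset.sum_nonneg fun m _ => (hp1 m).1)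
          (Finset.sum_nonneg fun i _ => hqdl0 i)
      have hSactP : Sact ≤ P := by
        have h1 : ∑ i, qdl i ≤ Δ := by
          have : ∑ i, qdl i = Δ * ∑ i, z.1 i := by
            simp only [hqdldef]
            rw [Finset.mul_sum]
          rw [this]
          calc Δ * ∑ i, z.1 i ≤ Δ * 1 := mul_le_mul_of_nonneg_left hz12 hΔ0
            _ = Δ := mul_one Δ
        rw [hSactdef]
        linarith [hp2]
      -- the multicast scaling function
      set s1f : ℝ → ℝ := fun μ => Real.logb 2 (1 + ⨅ j : Fin G, ⨅ k : Fin (K j),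
        sinrMu N η qdl (fun j k => μ * z.2 j k) Sact j k) with hs1fdef
      have hinf0 : ∀ μ ∈ Set.Icc (0:ℝ) 1, 0 ≤ ⨅ j : Fin G, ⨅ k : Fin (K j),
          sinrMu N η qdl (fun j k => μ * z.2 j k) Sact j k := fun μ hμ =>
        le_ciInf fun j => le_ciInf fun k =>
          sinrMu_nonneg hη hqdl0 (fun j k => mul_nonneg hμ.1 (hz2 j k).1) hSact0 j k
      have hs1cont : ContinuousOn s1f (Set.Icc (0:ℝ) 1) := by
        have hIcont : ContinuousOn (fun μ => ⨅ j : Fin G, ⨅ k : Fin (K j),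
            sinrMu N η qdl (fun j k => μ * z.2 j k) Sact j k) (Set.Icc (0:ℝ) 1) := by
          apply continuousOn_ciInf_aux
          intro j
          haveI := hne j
          apply continuousOn_ciInf_aux
          intro k
          unfold sinrMu
          apply ContinuousOn.div_const
          apply ContinuousOn.mul continuousOn_const
          apply ContinuousOn.div
          · exact ((continuous_id.mul continuous_const).mul continuous_const).continuousOn
          · exact (continuous_const.add (continuous_finset_sum _ fun t _ =>
              (continuous_id.mul continuous_const).mul continuous_const)).continuousOn
          · intro μ hμ
            exact (sinrMu_denom_pos hη (fun j k => mul_nonneg hμ.1 (hz2 j k).1) j).ne'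
        have heq : s1f = fun μ => Real.log (1 + ⨅ j : Fin G, ⨅ k : Fin (K j),
            sinrMu N η qdl (fun j k => μ * z.2 j k) Sact j k) / Real.log 2 := rfl
        rw [heq]
        apply ContinuousOn.div_const
        apply ContinuousOn.log (continuousOn_const.add hIcont)
        intro μ hμ
        have := hinf0 μ hμ
        show (1:ℝ) + ⨅ j : Fin G, ⨅ k : Fin (K j), sinrMu N η qdl (fun j k => μ * z.2 j k) Sact j k ≠ 0
        exact ne_of_gt (by linarith)
      have hs1f0 : s1f 0 = 0 := by
        rw [hs1fdef]
        simp [sinrMu]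
      have hs1f1 : Real.logb 2 (1 + γ * Δ) ≤ s1f 1 := by
        rw [hs1fdef]
        refine Real.logb_le_logb_of_le one_lt_two
          (by nlinarith [mul_nonneg hγ0 hΔ0]) (add_le_add_right ?_ 1)
        refine le_ciInf fun j => le_ciInf fun k => ?_
        have h1z : (fun (j : Fin G) (k : Fin (K j)) => (1:ℝ) * z.2 j k) = z.2 := by
          funext j k; rw [one_mul]
        rw [h1z]
        have hγjk : γ ≤ sinrMu N η z.1 z.2 P j k := by
          have h1 : PhiM N η P z = ⨅ j : Fin G, ⨅ k : Fin (K j),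
              sinrMu N η z.1 z.2 P j k := rfl
          rw [hγdef, h1]
          exact le_trans (ciInf_le (Finite.bddBelow_range _) j)
            (ciInf_le (Finite.bddBelow_range _) k)
        have hξ0 : 0 ≤ z.2 j k * η j k ^ 2 / (1 + ∑ t', z.2 j t' * η j t') :=
          div_nonneg (mul_nonneg (hz2 j k).1 (sq_nonneg _))
            (sinrMu_denom_pos hη (fun j k => (hz2 j k).1) j).le
        set ξ : ℝ := z.2 j k * η j k ^ 2 / (1 + ∑ t', z.2 j t' * η j t') with hξdef
        have hd1 : (0:ℝ) < 1 + η j k * P := by nlinarith [mul_nonneg (hη j k).le hP.le]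
        have hd2 : (0:ℝ) < 1 + η j k * Sact := by nlinarith [mul_nonneg (hη j k).le hSact0]
        have hsz : sinrMu N η z.1 z.2 P j k = (N:ℝ) * z.1 j * ξ / (1 + η j k * P) := by
          unfold sinrMu
          rw [← hξdef]
        have hsq : sinrMu N η qdl z.2 Sact j k
            = (N:ℝ) * (Δ * z.1 j) * ξ / (1 + η j k * Sact) := by
          unfold sinrMu
          rw [← hξdef]
        have step1 : γ * Δ ≤ Δ * ((N:ℝ) * z.1 j * ξ / (1 + η j k * P)) := by
          have h2 := mul_le_mul_of_nonneg_right hγjk hΔ0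
          rw [hsz] at h2
          linarith [h2]
        have step2 : Δ * ((N:ℝ) * z.1 j * ξ / (1 + η j k * P))
            ≤ (N:ℝ) * (Δ * z.1 j) * ξ / (1 + η j k * Sact) := by
          rw [mul_div_assoc']
          rw [div_le_div_iff₀ hd1 hd2]
          have hX0 : 0 ≤ Δ * ((N:ℝ) * z.1 j) * ξ :=
            mul_nonneg (mul_nonneg hΔ0 (mul_nonneg (Nat.cast_nonneg N) (hz11 j).1)) hξ0
          nlinarith [mul_nonneg (mul_nonneg hX0 (hη j k).le) (sub_nonneg.mpr hSactP)]
        rw [hsq]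
        linarith [step1, step2]
      have hIV1 := intermediate_value_Icc zero_le_one hs1cont
      have hy1mem : y.1 / c0 ∈ Set.Icc (s1f 0) (s1f 1) := by
        rw [hs1f0]
        constructor
        · exact div_nonneg hy10 hc0pos.le
        · refine le_trans ?_ hs1f1
          rw [div_le_iff₀ hc0pos]
          linarith [hy11]
      obtain ⟨μ, hμmem, hμeq⟩ := hIV1 hy1mem
      -- the unicast scaling function
      set s2f : ℝ → ℝ := fun ν => ∑ m, α m * Real.logb 2 (1 +
        sinrUn N U β p (fun m => ν * Eun m) Sact m) with hs2fdef
      have hsU0' : ∀ ν ∈ Set.Icc (0:ℝ) 1, ∀ m, 0 ≤ sinrUn N U β p (fun m => ν * Eun m) Sact m := by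
        intro ν hν m
        unfold sinrUn
        have hf0 : 0 ≤ ν * Eun m := mul_nonneg hν.1 (hEun m).le
        have hfβ : (0:ℝ) < 1 + ν * Eun m * β m := by
          nlinarith [mul_nonneg hf0 (hβ m).le]
        have hβS : (0:ℝ) < 1 + β m * Sact := by
          nlinarith [mul_nonneg (hβ m).le hSact0]
        apply div_nonneg _ hβS.le
        apply mul_nonneg (mul_nonneg (Nat.cast_nonneg N) (hp1 m).1)
        exact div_nonneg (mul_nonneg hf0 (sq_nonneg _)) hfβ.le
      have hs2cont : ContinuousOn s2f (Set.Icc (0:ℝ) 1) := by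
        rw [hs2fdef]
        apply continuousOn_finset_sum
        intro m _
        apply ContinuousOn.mul continuousOn_const
        have hJ : ContinuousOn (fun ν => sinrUn N U β p (fun m => ν * Eun m) Sact m)
            (Set.Icc (0:ℝ) 1) := by
          unfold sinrUn
          apply ContinuousOn.div_const
          apply ContinuousOn.mul continuousOn_const
          apply ContinuousOn.div
          · exact ((continuous_id.mul continuous_const).mul continuous_const).continuousOn
          · exact (continuous_const.add
              ((continuous_id.mul continuous_const).mul continuous_const)).continuousOn
          · intro ν hν
            have h := mul_nonneg (mul_nonneg hν.1 (hEun m).le) (hβ m).le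
            show (1:ℝ) + ν * Eun m * β m ≠ 0
            exact ne_of_gt (by nlinarith [h])
        have heq : (fun ν => Real.logb 2 (1 + sinrUn N U β p (fun m => ν * Eun m) Sact m))
            = fun ν => Real.log (1 + sinrUn N U β p (fun m => ν * Eun m) Sact m)
              / Real.log 2 := rfl
        rw [heq]
        apply ContinuousOn.div_const
        apply ContinuousOn.log (continuousOn_const.add hJ)
        intro ν hν
        have := hsU0' ν hν m
        show (1:ℝ) + sinrUn N U β p (fun m => ν * Eun m) Sact m ≠ 0
        exact ne_of_gt (by linarith)
      have hs2f0 : s2f 0 = 0 := by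
        rw [hs2fdef]
        simp [sinrUn]
      have hs2f1 : F2 U α cU (P - Δ) ≤ s2f 1 := by
        rw [hs2fdef, ← hpeq]
        have h1E : (fun m => (1:ℝ) * Eun m) = Eun := by funext m; rw [one_mul]
        show gF α cU p ≤ ∑ m, α m * Real.logb 2 (1 +
          sinrUn N U β p (fun m => (1:ℝ) * Eun m) Sact m)
        rw [h1E]
        have hgFeq : gF α cU p = ∑ m, α m * Real.logb 2 (1 + cU m * p m) := rfl
        rw [hgFeq]
        refine Finset.sum_le_sum fun m _ => ?_
        refine mul_le_mul_of_nonneg_left ?_ (hα0 m)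
        have hβS : (0:ℝ) < 1 + β m * Sact := by
          nlinarith [mul_nonneg (hβ m).le hSact0]
        have hcp : cU m * p m = (N:ℝ) * p m * θh m / (1 + β m * P) := by
          rw [hcUdef]
          field_simp
        have hsr : sinrUn N U β p Eun Sact m = (N:ℝ) * p m * θh m / (1 + β m * Sact) := by
          unfold sinrUn
          rw [hθhdef]
        have hX0 : 0 ≤ (N:ℝ) * p m * θh m :=
          mul_nonneg (mul_nonneg (Nat.cast_nonneg N) (hp1 m).1) (hθh0 m)
        have hle : cU m * p m ≤ sinrUn N U β p Eun Sact m := by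
          rw [hcp, hsr, div_le_div_iff₀ (hβP m) hβS]
          nlinarith [mul_nonneg (mul_nonneg hX0 (hβ m).le) (sub_nonneg.mpr hSactP)]
        refine Real.logb_le_logb_of_le one_lt_two ?_ (by linarith)
        nlinarith [mul_nonneg (hcU0 m) (hp1 m).1]
      have hIV2 := intermediate_value_Icc zero_le_one hs2cont
      have hy2mem : y.2 / c0 ∈ Set.Icc (s2f 0) (s2f 1) := by
        rw [hs2f0]
        constructor
        · exact div_nonneg hy20 hc0pos.le
        · refine le_trans ?_ hs2f1
          rw [div_le_iff₀ hc0pos]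
          linarith [hy21]
      obtain ⟨ν, hνmem, hνeq⟩ := hIV2 hy2mem
      -- assemble the witness
      have hτR : (0:ℝ) < ((U + G : ℕ) : ℝ) := by
        have : 0 < U + G := by omega
        exact_mod_cast this
      refine ⟨U + G, fun j k => μ * z.2 j k / ((U + G : ℕ) : ℝ), qdl,
        fun m => ν * Eun m / ((U + G : ℕ) : ℝ), p, ?_, ?_⟩
      · refine ⟨le_refl _, hT, hqdl0, fun m => (hp1 m).1, fun j k => ⟨?_, ?_⟩,
          fun m => ⟨?_, ?_⟩, ?_⟩
        · exact div_nonneg (mul_nonneg hμmem.1 (hz2 j k).1) hτR.le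
        · have hcan : ((U + G : ℕ) : ℝ) * (μ * z.2 j k / ((U + G : ℕ) : ℝ))
              = μ * z.2 j k := by field_simp
          rw [hcan]
          calc μ * z.2 j k ≤ 1 * z.2 j k :=
                mul_le_mul_of_nonneg_right hμmem.2 (hz2 j k).1
            _ = z.2 j k := one_mul _
            _ ≤ Emu j k := (hz2 j k).2
        · exact div_nonneg (mul_nonneg hνmem.1 (hEun m).le) hτR.le
        · have hcan : ((U + G : ℕ) : ℝ) * (ν * Eun m / ((U + G : ℕ) : ℝ))
              = ν * Eun m := by field_simp
          rw [hcan]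
          calc ν * Eun m ≤ 1 * Eun m :=
                mul_le_mul_of_nonneg_right hνmem.2 (hEun m).le
            _ = Eun m := one_mul _
        · exact hSactP
      · rw [OmuX_eq, OunX_eq]
        have heq1 : (fun (j : Fin G) (k : Fin (K j)) =>
            ((U + G : ℕ) : ℝ) * (μ * z.2 j k / ((U + G : ℕ) : ℝ)))
            = fun (j : Fin G) (k : Fin (K j)) => μ * z.2 j k := by
          funext j k; field_simp
        have heq2 : (fun m => ((U + G : ℕ) : ℝ) * (ν * Eun m / ((U + G : ℕ) : ℝ)))
            = fun m => ν * Eun m := by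
          funext m; field_simp
        rw [heq1, heq2]
        have hc0' : (1 : ℝ) - ((U + G : ℕ) : ℝ) / (T : ℝ) = c0 := by
          rw [hc0def]
          push_cast
          ring
        rw [hc0', ← hSactdef]
        show y = (c0 * s1f μ, c0 * s2f ν)
        rw [hμeq, hνeq]
        have h1 : c0 * (y.1 / c0) = y.1 := by field_simp
        have h2 : c0 * (y.2 / c0) = y.2 := by field_simp
        rw [h1, h2]
  rw [Set.Subset.antisymm hSB hBS]
  exact hBconv
end
end

section
/- The attainable set S is downward comprehensive in the nonnegative orthant: if (a,b) ∈ S and a', b' are reals with 0 ≤ a' ≤ a and 0 ≤ b' ≤ b, then (a',b') ∈ S. -/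
open Finset

noncomputable section

lemma flatten_iInf {G : ℕ} {K : Fin G → ℕ}
    (hG : (Finset.univ : Finset (Fin G)).Nonempty)
    (hKn : ∀ j, (Finset.univ : Finset (Fin (K j))).Nonempty)
    (F : ∀ j, Fin (K j) → ℝ) :
    (⨅ j, ⨅ k, F j k) = Finset.univ.inf' hG fun j => Finset.univ.inf' (hKn j) (F j) := by
  haveI : Nonempty (Fin G) := ⟨hG.choose⟩
  have h1 : ∀ j, (⨅ k, F j k) = Finset.univ.inf' (hKn j) (F j) := fun j => by
    haveI : Nonempty (Fin (K j)) := ⟨(hKn j).choose⟩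
    exact (Finset.inf'_univ_eq_ciInf _).symm
  simp only [h1]
  exact (Finset.inf'_univ_eq_ciInf _).symm

lemma aux_mu {U G : ℕ} {K : Fin G → ℕ} (hG : 1 ≤ G) (hK : ∀ j, 1 ≤ K j)
    (N T τ : ℕ) (η : ∀ j : Fin G, Fin (K j) → ℝ)
    (qup : ∀ j : Fin G, Fin (K j) → ℝ) (qdl : Fin G → ℝ) (pdl : Fin U → ℝ)
    (hη : ∀ j k, 0 < η j k) (hqup : ∀ j k, 0 ≤ qup j k)
    (hqdl : ∀ j, 0 ≤ qdl j) (hpdl : ∀ m, 0 ≤ pdl m)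
    (a' : ℝ) (ha'0 : 0 ≤ a') (ha' : a' ≤ OmuX N T η τ qup qdl pdl) :
    ∃ s₀ : ℝ, s₀ ∈ Set.Icc (0:ℝ) 1 ∧
      OmuX N T η τ (fun j k => s₀ * qup j k) qdl pdl = a' := by
  have hGne : (Finset.univ : Finset (Fin G)).Nonempty := ⟨⟨0, hG⟩, mem_univ _⟩
  have hKne : ∀ j, (Finset.univ : Finset (Fin (K j))).Nonempty :=
    fun j => ⟨⟨0, hK j⟩, mem_univ _⟩
  have hS : (0:ℝ) ≤ ∑ m, pdl m + ∑ i, qdl i :=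
    add_nonneg (Finset.sum_nonneg fun m _ => hpdl m) (Finset.sum_nonneg fun i _ => hqdl i)
  have hrw : ∀ s : ℝ, OmuX N T η τ (fun j k => s * qup j k) qdl pdl
      = (1 - (τ:ℝ)/(T:ℝ)) * Real.logb 2 (1 + Finset.univ.inf' hGne fun j =>
          Finset.univ.inf' (hKne j) fun k =>
            (N:ℝ) * qdl j * ((τ:ℝ) * (s * qup j k) * (η j k)^2 /
              (1 + ∑ t, (τ:ℝ) * (s * qup j t) * η j t)) /
            (1 + η j k * (∑ m, pdl m + ∑ i, qdl i))) := by
    intro s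
    simp only [OmuX, xiX]
    rw [flatten_iInf hGne hKne]
  -- nonnegativity of each term
  have hterm : ∀ s : ℝ, 0 ≤ s → ∀ j k,
      (0:ℝ) ≤ (N:ℝ) * qdl j * ((τ:ℝ) * (s * qup j k) * (η j k)^2 /
        (1 + ∑ t, (τ:ℝ) * (s * qup j t) * η j t)) /
        (1 + η j k * (∑ m, pdl m + ∑ i, qdl i)) := by
    intro s hs j k
    have hden1 : (0:ℝ) ≤ 1 + ∑ t, (τ:ℝ) * (s * qup j t) * η j t :=
      add_nonneg zero_le_one (Finset.sum_nonneg fun t _ =>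
        mul_nonneg (mul_nonneg (Nat.cast_nonneg τ) (mul_nonneg hs (hqup j t))) (hη j t).le)
    apply div_nonneg
    · exact mul_nonneg (mul_nonneg (Nat.cast_nonneg N) (hqdl j))
        (div_nonneg (mul_nonneg (mul_nonneg (Nat.cast_nonneg τ)
          (mul_nonneg hs (hqup j k))) (sq_nonneg _)) hden1)
    · exact add_nonneg zero_le_one (mul_nonneg (hη j k).le hS)
  have hcont : ContinuousOn
      (fun s => OmuX N T η τ (fun j k => s * qup j k) qdl pdl) (Set.Icc (0:ℝ) 1) := by
    rw [funext hrw]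
    apply ContinuousOn.mul continuousOn_const
    simp only [Real.logb]
    apply ContinuousOn.div_const
    apply ContinuousOn.log
    · apply ContinuousOn.add continuousOn_const
      apply ContinuousOn.finset_inf'_apply
      intro j _
      apply ContinuousOn.finset_inf'_apply
      intro k _
      apply ContinuousOn.div_const
      apply ContinuousOn.mul continuousOn_const
      apply ContinuousOn.div
      · fun_prop
      · fun_prop
      · intro s hs
        have : (0:ℝ) < 1 + ∑ t, (τ:ℝ) * (s * qup j t) * η j t :=
          add_pos_of_pos_of_nonneg one_pos (Finset.sum_nonneg fun t _ =>
            mul_nonneg (mul_nonneg (Nat.cast_nonneg τ) (mul_nonneg hs.1 (hqup j t))) (hη j t).le)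
        exact this.ne'
    · intro s hs
      have : (0:ℝ) < 1 + Finset.univ.inf' hGne fun j =>
          Finset.univ.inf' (hKne j) fun k =>
            (N:ℝ) * qdl j * ((τ:ℝ) * (s * qup j k) * (η j k)^2 /
              (1 + ∑ t, (τ:ℝ) * (s * qup j t) * η j t)) /
            (1 + η j k * (∑ m, pdl m + ∑ i, qdl i)) := by
        apply add_pos_of_pos_of_nonneg one_pos
        apply Finset.le_inf'
        intro j _
        apply Finset.le_inf'
        intro k _
        exact hterm s hs.1 j k
      exact this.ne'
  have h0 : OmuX N T η τ (fun j k => (0:ℝ) * qup j k) qdl pdl = 0 := by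
    rw [hrw 0]
    simp [Finset.inf'_const]
  have h1 : OmuX N T η τ (fun j k => (1:ℝ) * qup j k) qdl pdl
      = OmuX N T η τ qup qdl pdl := by
    have : (fun (j : Fin G) (k : Fin (K j)) => (1:ℝ) * qup j k) = qup := by
      funext j k; rw [one_mul]
    rw [this]
  have hmem : a' ∈ Set.Icc ((fun s => OmuX N T η τ (fun j k => s * qup j k) qdl pdl) 0)
      ((fun s => OmuX N T η τ (fun j k => s * qup j k) qdl pdl) 1) := by
    simp only [h0, h1]
    exact ⟨ha'0, ha'⟩
  obtain ⟨s₀, hs₀, hfs⟩ := intermediate_value_Icc zero_le_one hcont hmem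
  exact ⟨s₀, hs₀, hfs⟩

lemma aux_un {U G : ℕ} (N T τ : ℕ) (β α : Fin U → ℝ)
    (pup pdl : Fin U → ℝ) (qdl : Fin G → ℝ)
    (hβ : ∀ m, 0 < β m) (hpup : ∀ m, 0 ≤ pup m)
    (hpdl : ∀ m, 0 ≤ pdl m) (hqdl : ∀ j, 0 ≤ qdl j)
    (b' : ℝ) (hb'0 : 0 ≤ b') (hb' : b' ≤ OunX N T β α τ pup pdl qdl) :
    ∃ t₀ : ℝ, t₀ ∈ Set.Icc (0:ℝ) 1 ∧
      OunX N T β α τ (fun m => t₀ * pup m) pdl qdl = b' := by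
  have hS : (0:ℝ) ≤ ∑ u, pdl u + ∑ j, qdl j :=
    add_nonneg (Finset.sum_nonneg fun m _ => hpdl m) (Finset.sum_nonneg fun j _ => hqdl j)
  have hcont : ContinuousOn
      (fun t => OunX N T β α τ (fun m => t * pup m) pdl qdl) (Set.Icc (0:ℝ) 1) := by
    simp only [OunX, thetaX]
    apply ContinuousOn.mul continuousOn_const
    apply continuousOn_finset_sum
    intro m _
    apply ContinuousOn.mul continuousOn_const
    simp only [Real.logb]
    apply ContinuousOn.div_const
    apply ContinuousOn.log
    · apply ContinuousOn.add continuousOn_const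
      apply ContinuousOn.div_const
      apply ContinuousOn.mul continuousOn_const
      apply ContinuousOn.div
      · fun_prop
      · fun_prop
      · intro t ht
        have : (0:ℝ) < 1 + (τ:ℝ) * (t * pup m) * β m :=
          add_pos_of_pos_of_nonneg one_pos
            (mul_nonneg (mul_nonneg (Nat.cast_nonneg τ) (mul_nonneg ht.1 (hpup m))) (hβ m).le)
        exact this.ne'
    · intro t ht
      have hden : (0:ℝ) ≤ 1 + (τ:ℝ) * (t * pup m) * β m :=
        add_nonneg zero_le_one
          (mul_nonneg (mul_nonneg (Nat.cast_nonneg τ) (mul_nonneg ht.1 (hpup m))) (hβ m).le)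
      have : (0:ℝ) < 1 + (N:ℝ) * pdl m *
          ((τ:ℝ) * (t * pup m) * β m ^ 2 / (1 + (τ:ℝ) * (t * pup m) * β m)) /
          (1 + β m * (∑ u, pdl u + ∑ j, qdl j)) := by
        apply add_pos_of_pos_of_nonneg one_pos
        apply div_nonneg
        · exact mul_nonneg (mul_nonneg (Nat.cast_nonneg N) (hpdl m))
            (div_nonneg (mul_nonneg (mul_nonneg (Nat.cast_nonneg τ)
              (mul_nonneg ht.1 (hpup m))) (sq_nonneg _)) hden)
        · exact add_nonneg zero_le_one (mul_nonneg (hβ m).le hS)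
      exact this.ne'
  have h0 : OunX N T β α τ (fun m => (0:ℝ) * pup m) pdl qdl = 0 := by
    simp [OunX, thetaX]
  have h1 : OunX N T β α τ (fun m => (1:ℝ) * pup m) pdl qdl = OunX N T β α τ pup pdl qdl := by
    have : (fun m => (1:ℝ) * pup m) = pup := by funext m; rw [one_mul]
    rw [this]
  have hmem : b' ∈ Set.Icc ((fun t => OunX N T β α τ (fun m => t * pup m) pdl qdl) 0)
      ((fun t => OunX N T β α τ (fun m => t * pup m) pdl qdl) 1) := by
    simp only [h0, h1]
    exact ⟨hb'0, hb'⟩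
  obtain ⟨t₀, ht₀, hgt⟩ := intermediate_value_Icc zero_le_one hcont hmem
  exact ⟨t₀, ht₀, hgt⟩

/-- the attainable set `S` is downward comprehensive in the
nonnegative orthant: if `(a,b) ∈ S` and `0 ≤ a' ≤ a`, `0 ≤ b' ≤ b`, then `(a',b') ∈ S`. -/
theorem moop_attainable_set_downward_comprehensive
    (U G : ℕ) (hU : 1 ≤ U) (hG : 1 ≤ G) (K : Fin G → ℕ) (hK : ∀ j, 1 ≤ K j)
    (N : ℕ) (hN : 1 ≤ N) (T : ℕ) (hT : U + G ≤ T)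
    (P : ℝ) (hP : 0 < P)
    (η Emu : ∀ j : Fin G, Fin (K j) → ℝ) (β Eun α : Fin U → ℝ)
    (hη : ∀ j k, 0 < η j k) (hEmu : ∀ j k, 0 < Emu j k)
    (hβ : ∀ m, 0 < β m) (hEun : ∀ m, 0 < Eun m) (hα : ∀ m, 0 < α m)
    (a b a' b' : ℝ) (hab : (a, b) ∈ attainS N T P η Emu β Eun α)
    (ha'0 : 0 ≤ a') (ha' : a' ≤ a) (hb'0 : 0 ≤ b') (hb' : b' ≤ b) :
    (a', b') ∈ attainS N T P η Emu β Eun α := by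
  obtain ⟨τ, qup, qdl, pup, pdl, hfeas, heq⟩ := hab
  obtain ⟨hτ1, hτ2, hqdl, hpdl, hqup, hpup, hsum⟩ := hfeas
  have ha : a = OmuX N T η τ qup qdl pdl := congrArg Prod.fst heq
  have hb : b = OunX N T β α τ pup pdl qdl := congrArg Prod.snd heq
  obtain ⟨s₀, hs₀, hfs⟩ := aux_mu hG hK N T τ η qup qdl pdl hη
    (fun j k => (hqup j k).1) hqdl hpdl a' ha'0 (ha ▸ ha')
  obtain ⟨t₀, ht₀, hgt⟩ := aux_un N T τ β α pup pdl qdl hβ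
    (fun m => (hpup m).1) hpdl hqdl b' hb'0 (hb ▸ hb')
  refine ⟨τ, fun j k => s₀ * qup j k, qdl, fun m => t₀ * pup m, pdl,
    ⟨hτ1, hτ2, hqdl, hpdl, ?_, ?_, hsum⟩, ?_⟩
  · intro j k
    refine ⟨mul_nonneg hs₀.1 (hqup j k).1, ?_⟩
    have h1 : (τ:ℝ) * (s₀ * qup j k) = s₀ * ((τ:ℝ) * qup j k) := by ring
    rw [h1]
    calc s₀ * ((τ:ℝ) * qup j k) ≤ 1 * ((τ:ℝ) * qup j k) :=
          mul_le_mul_of_nonneg_right hs₀.2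
            (mul_nonneg (Nat.cast_nonneg τ) (hqup j k).1)
      _ = (τ:ℝ) * qup j k := one_mul _
      _ ≤ Emu j k := (hqup j k).2
  · intro m
    refine ⟨mul_nonneg ht₀.1 (hpup m).1, ?_⟩
    have h1 : (τ:ℝ) * (t₀ * pup m) = t₀ * ((τ:ℝ) * pup m) := by ring
    rw [h1]
    calc t₀ * ((τ:ℝ) * pup m) ≤ 1 * ((τ:ℝ) * pup m) :=
          mul_le_mul_of_nonneg_right ht₀.2
            (mul_nonneg (Nat.cast_nonneg τ) (hpup m).1)
      _ = (τ:ℝ) * pup m := one_mul _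
      _ ≤ Eun m := (hpup m).2
  · rw [Prod.mk.injEq]
    exact ⟨hfs.symm, hgt.symm⟩
end
end
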